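/- arXiv:1711.01542 — 9 statements merged into one kernel-verified Lean document; each statement's English description precedes it below -/
import Mathlib

section
/- Let a < b be extended reals, let A be differentiable and strictly decreasing on (a,b) with lim_{x→a⁺} A(x) = +∞ and lim_{x→b⁻} A(x) = 0, let B > 0 and let n be a positive natural number. Let ν be the probability measure on ℝ with density r ↦ (−A′(r))·B^n·(A(r))^{n−1}·exp(−B·A(r))/Γ(n) on (a,b) and 0 elsewhere (the distribution of the n-th lower record value R′ₙ from the type-II exponential family). Then the pushforward of ν under the map A is the Gamma distribution with shape n and rate B; that is, A(R′ₙ) ~ Gamma(n, rate B). -/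
open MeasureTheory ProbabilityTheory Filter

private noncomputable def recG (B : ℝ) (n : ℕ) (t : ℝ) : ENNReal :=
  ENNReal.ofReal (B ^ n * t ^ (n - 1) * Real.exp (-(B * t)) / Real.Gamma n)

private lemma recG_measurable (B : ℝ) (n : ℕ) : Measurable (recG B n) := by
  unfold recG
  fun_prop

private lemma map_withDensity_comp {α β : Type*} [MeasurableSpace α] [MeasurableSpace β]
    (μ : Measure α) {f : α → β} (hf : Measurable f) {g : β → ENNReal} (hg : Measurable g) :
    (μ.withDensity (fun x => g (f x))).map f = (μ.map f).withDensity g := by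
  ext t ht
  rw [Measure.map_apply hf ht, withDensity_apply _ (hf ht), withDensity_apply _ ht,
    setLIntegral_map ht hg hf]

/-- If `ν` is the distribution of the `n`-th lower record value from the type-II exponential
family (with density `r ↦ (-A'(r)) B^n (A r)^(n-1) exp(-B A r) / Γ(n)` on `(a, b)`), then the
pushforward of `ν` under `A` is the Gamma distribution with shape `n` and rate `B`. -/
theorem record_pushforward_is_gamma (a b : EReal) (hab : a < b)
    (A A' : ℝ → ℝ) (B : ℝ) (hB : 0 < B) (n : ℕ) (hn : 0 < n)
    (hAmeas : Measurable A)
    (hderiv : ∀ x ∈ {x : ℝ | a < (x : EReal) ∧ (x : EReal) < b}, HasDerivAt A (A' x) x)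
    (hAanti : StrictAntiOn A {x : ℝ | a < (x : EReal) ∧ (x : EReal) < b})
    (hAa : Tendsto A (Filter.comap (fun x : ℝ => (x : EReal)) (nhdsWithin a (Set.Ioi a)))
      Filter.atTop)
    (hAb : Tendsto A (Filter.comap (fun x : ℝ => (x : EReal)) (nhdsWithin b (Set.Iio b)))
      (nhds 0))
    (ν : Measure ℝ)
    (hν : ν = volume.withDensity fun r : ℝ => ENNReal.ofReal
      (if a < (r : EReal) ∧ (r : EReal) < b then
        (-A' r) * B ^ n * (A r) ^ (n - 1) * Real.exp (-(B * A r)) / Real.Gamma n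
      else 0)) :
    ν.map A = gammaMeasure (n : ℝ) B := by
  set s : Set ℝ := {x : ℝ | a < (x : EReal) ∧ (x : EReal) < b} with hs_def
  have hs_pre : s = (fun x : ℝ => (x : EReal)) ⁻¹' (Set.Ioo a b) := rfl
  have hsopen : IsOpen s := hs_pre ▸ isOpen_Ioo.preimage continuous_coe_real_ereal
  have hsm : MeasurableSet s := hsopen.measurableSet
  have hsord : s.OrdConnected := by
    constructor
    intro x hx y hy z hz
    exact ⟨lt_of_lt_of_le hx.1 (EReal.coe_le_coe_iff.2 hz.1),
      lt_of_le_of_lt (EReal.coe_le_coe_iff.2 hz.2) hy.2⟩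
  set Fa := Filter.comap (fun x : ℝ => (x : EReal)) (nhdsWithin a (Set.Ioi a)) with hFa_def
  set Fb := Filter.comap (fun x : ℝ => (x : EReal)) (nhdsWithin b (Set.Iio b)) with hFb_def
  have hFa : Fa.NeBot := by
    rw [hFa_def, Filter.comap_neBot_iff]
    intro t ht
    obtain ⟨u, hu, hsub⟩ := (mem_nhdsGT_iff_exists_Ioo_subset' hab).1 ht
    obtain ⟨x, hx1, hx2⟩ := EReal.lt_iff_exists_real_btwn.1 hu
    exact ⟨x, hsub ⟨hx1, hx2⟩⟩
  have hFb : Fb.NeBot := by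
    rw [hFb_def, Filter.comap_neBot_iff]
    intro t ht
    obtain ⟨l, hl, hsub⟩ := (mem_nhdsLT_iff_exists_Ioo_subset' hab).1 ht
    obtain ⟨x, hx1, hx2⟩ := EReal.lt_iff_exists_real_btwn.1 hl
    exact ⟨x, hsub ⟨hx1, hx2⟩⟩
  have hFas : ∀ᶠ x in Fa, x ∈ s := by
    have h1 : Set.Ioo a b ∈ nhdsWithin a (Set.Ioi a) :=
      Ioo_mem_nhdsGT_of_mem ⟨le_refl a, hab⟩
    exact Filter.preimage_mem_comap h1
  have hFbs : ∀ᶠ x in Fb, x ∈ s := by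
    have h1 : Set.Ioo a b ∈ nhdsWithin b (Set.Iio b) :=
      Ioo_mem_nhdsLT_of_mem ⟨hab, le_refl b⟩
    exact Filter.preimage_mem_comap h1
  -- eventually along Fb, points are in s and above any fixed r ∈ s
  have hFbgt : ∀ r ∈ s, ∀ᶠ y in Fb, y ∈ s ∧ r < y := by
    intro r hr
    refine hFbs.and ?_
    have h1 : Set.Ioi (r : EReal) ∈ nhdsWithin b (Set.Iio b) :=
      nhdsWithin_le_nhds (isOpen_Ioi.mem_nhds hr.2)
    have h2 : ((fun x : ℝ => (x : EReal)) ⁻¹' Set.Ioi (r : EReal)) ∈ Fb := by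
      rw [hFb_def]; exact Filter.preimage_mem_comap h1
    refine Filter.mem_of_superset h2 ?_
    intro y hy
    exact EReal.coe_lt_coe_iff.1 hy
  have hAnonneg : ∀ r ∈ s, 0 ≤ A r := by
    intro r hr
    have h2 : ∀ᶠ y in Fb, A y ≤ A r :=
      (hFbgt r hr).mono fun y hy => (hAanti hr hy.1 hy.2).le
    exact le_of_tendsto hAb h2
  have hApos : ∀ r ∈ s, 0 < A r := by
    intro r hr
    obtain ⟨y, hy⟩ := (hFbgt r hr).exists
    exact lt_of_le_of_lt (hAnonneg y hy.1) (hAanti hr hy.1 hy.2)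
  have hA'le : ∀ r ∈ s, A' r ≤ 0 := by
    intro r hr
    have hmono : nhdsWithin r (Set.Ioi r) ≤ nhdsWithin r {r}ᶜ :=
      nhdsWithin_mono r fun y hy => Set.mem_compl_singleton_iff.2 (ne_of_gt hy)
    have hslope : Tendsto (slope A r) (nhdsWithin r (Set.Ioi r)) (nhds (A' r)) :=
      (hasDerivAt_iff_tendsto_slope.1 (hderiv r hr)).mono_left hmono
    refine le_of_tendsto hslope ?_
    have hmem : ∀ᶠ y in nhdsWithin r (Set.Ioi r), y ∈ s :=
      (hsopen.eventually_mem hr).filter_mono nhdsWithin_le_nhds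
    filter_upwards [hmem, self_mem_nhdsWithin] with y hy hy'
    have hle : A y ≤ A r := (hAanti hr hy hy').le
    rw [slope_def_field]
    exact div_nonpos_of_nonpos_of_nonneg (sub_nonpos.2 hle) (sub_nonneg.2 hy'.le)
  have himg : A '' s = Set.Ioi 0 := by
    apply Set.Subset.antisymm
    · rintro t ⟨r, hr, rfl⟩
      exact hApos r hr
    · intro t ht
      have hx : ∃ x, x ∈ s ∧ t < A x := by
        have h1 : ∀ᶠ y in Fa, y ∈ s ∧ t < A y := hFas.and (hAa.eventually_gt_atTop t)
        exact h1.exists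
      have hy : ∃ y, y ∈ s ∧ A y < t := by
        have h1 : ∀ᶠ y in Fb, y ∈ s ∧ A y < t := hFbs.and (hAb.eventually_lt_const ht)
        exact h1.exists
      obtain ⟨x, hxs, hxt⟩ := hx
      obtain ⟨y, hys, hyt⟩ := hy
      have hsub : Set.uIcc y x ⊆ s := hsord.uIcc_subset hys hxs
      have hcont : ContinuousOn A (Set.uIcc y x) :=
        fun z hz => ((hderiv z (hsub hz)).continuousAt).continuousWithinAt
      have ht' : t ∈ Set.uIcc (A y) (A x) := Set.Icc_subset_uIcc ⟨hyt.le, hxt.le⟩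
      obtain ⟨z, hz, hzt⟩ := intermediate_value_uIcc hcont ht'
      exact ⟨z, hsub hz, hzt⟩
  -- rewrite the density
  have hf1 : Measurable fun r : ℝ => ENNReal.ofReal |deriv A r| :=
    ENNReal.measurable_ofReal.comp (measurable_deriv A).abs
  have hcore : (fun r : ℝ => ENNReal.ofReal
      (if a < (r : EReal) ∧ (r : EReal) < b then
        (-A' r) * B ^ n * (A r) ^ (n - 1) * Real.exp (-(B * A r)) / Real.Gamma n
      else 0))
      = s.indicator ((fun r : ℝ => ENNReal.ofReal |deriv A r|) * fun r => recG B n (A r)) := by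
    funext r
    by_cases hr : r ∈ s
    · rw [Set.indicator_of_mem hr]
      rw [if_pos (show a < (r : EReal) ∧ (r : EReal) < b from hr)]
      have h1 : deriv A r = A' r := (hderiv r hr).deriv
      have habs : |deriv A r| = -A' r := by rw [h1, abs_of_nonpos (hA'le r hr)]
      show _ = ENNReal.ofReal |deriv A r| * recG B n (A r)
      rw [recG, ← ENNReal.ofReal_mul (abs_nonneg _), habs]
      congr 1
      ring
    · rw [Set.indicator_of_notMem hr,
        if_neg (show ¬(a < (r : EReal) ∧ (r : EReal) < b) from hr), ENNReal.ofReal_zero]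
  have hmap1 : Measure.map A ((volume.restrict s).withDensity
      fun x => ENNReal.ofReal |deriv A x|) = volume.restrict (A '' s) := by
    have hfd : ∀ x ∈ s, HasFDerivWithinAt A
        (ContinuousLinearMap.smulRight (1 : ℝ →L[ℝ] ℝ) (deriv A x)) s x := by
      intro x hx
      have h1 : deriv A x = A' x := (hderiv x hx).deriv
      rw [h1]
      exact (hderiv x hx).hasFDerivAt.hasFDerivWithinAt
    have := map_withDensity_abs_det_fderiv_eq_addHaar volume hsm.nullMeasurableSet hfd hAanti.injOn
    simpa only [ContinuousLinearMap.det_smulRight, ContinuousLinearMap.one_apply, one_mul] using this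
  have h0 : ∀ᵐ x : ℝ, x ≠ (0 : ℝ) := by
    rw [ae_iff]
    have : {x : ℝ | ¬x ≠ 0} = {0} := by ext x; simp
    rw [this]
    exact measure_singleton 0
  have hae : (Set.Ioi (0:ℝ)).indicator (recG B n) =ᵐ[volume] gammaPDF (n : ℝ) B := by
    filter_upwards [h0] with x hx
    rcases lt_or_gt_of_ne hx with h | h
    · rw [Set.indicator_of_notMem (show x ∉ Set.Ioi (0:ℝ) by simpa using h.le), gammaPDF_of_neg h]
    · rw [Set.indicator_of_mem (Set.mem_Ioi.mpr h), gammaPDF_of_nonneg h.le, recG]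
      congr 1
      have h1 : ((n : ℝ)) - 1 = ((n - 1 : ℕ) : ℝ) := by
        rw [Nat.cast_sub hn]
        simp
      rw [h1, Real.rpow_natCast, Real.rpow_natCast]
      ring
  rw [hν, hcore, withDensity_indicator hsm,
    withDensity_mul _ hf1 (show Measurable fun r : ℝ => recG B n (A r) from (recG_measurable B n).comp hAmeas),
    map_withDensity_comp _ hAmeas (recG_measurable B n), hmap1, himg,
    ← withDensity_indicator measurableSet_Ioi]
  rw [show gammaMeasure (n : ℝ) B = volume.withDensity (gammaPDF (n : ℝ) B) from rfl]
  exact withDensity_congr_ae hae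
end

section
/- (Theorem 4, part ii) Let B > 0 and c ≥ 0. Then lim_{m→∞} ∫₀^∞ exp(−m·c/t) · B^m t^{m−1} e^{−Bt}/Γ(m) dt = exp(−c·B). That is, if Tₘ ~ Gamma(shape m, rate B), then E[exp(−m·c/Tₘ)] → exp(−c·B) as m → ∞; hence the MLE F̂ of the CDF F(x;θ) = exp(−B(θ)A(x)) based on m lower record values, F̂ = exp(−m·A(x)/A(R′ₘ)), is asymptotically unbiased. -/
set_option maxHeartbeats 1000000

open MeasureTheory Filter Set

lemma exp_neg_lip {x y : ℝ} (hx : 0 ≤ x) (hy : 0 ≤ y) :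
    |Real.exp (-x) - Real.exp (-y)| ≤ |x - y| := by
  wlog h : y ≤ x generalizing x y
  · rw [abs_sub_comm, abs_sub_comm x y]; exact this hy hx (le_of_not_ge h)
  have h1 : Real.exp (-x) ≤ Real.exp (-y) := Real.exp_le_exp.2 (by linarith)
  rw [abs_of_nonpos (by linarith), abs_of_nonneg (by linarith)]
  have h2 : 1 - (x - y) ≤ Real.exp (-(x - y)) := by
    have := Real.add_one_le_exp (-(x - y)); linarith
  have h3 : Real.exp (-x) = Real.exp (-y) * Real.exp (-(x - y)) := by
    rw [← Real.exp_add]; ring_nf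
  have h4 : Real.exp (-y) ≤ 1 := Real.exp_le_one_iff.2 (by linarith)
  nlinarith [Real.exp_pos (-y)]

lemma phi_integrable {B : ℝ} (hB : 0 < B) {r : ℝ} (hr : 0 < r) :
    IntegrableOn (fun t : ℝ => t ^ (r - 1) * Real.exp (-(B * t))) (Ioi 0) := by
  have := integrableOn_rpow_mul_exp_neg_mul_rpow (p := 1) (s := r - 1) (b := B)
    (by linarith) one_pos hB
  refine this.congr_fun (fun t ht => ?_) measurableSet_Ioi
  simp only [Real.rpow_one]; ring_nf

lemma key_bound (B c A : ℝ) (hB : 0 < B) (hc : 0 ≤ c) (hA : 0 < A) (m : ℕ) (hm : 2 ≤ m) :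
    |(∫ t in Set.Ioi (0 : ℝ), Real.exp (-((m : ℝ) * c / t)) *
          (B ^ m * t ^ (m - 1) * Real.exp (-(B * t)) / Real.Gamma (m : ℝ)))
        - Real.exp (-(c * B))|
      ≤ c * (m : ℝ) / (2 * A * ((m : ℝ) - 1)) + c * A * B ^ 2 / (2 * ((m : ℝ) - 1)) := by
  have hM : (2 : ℝ) ≤ (m : ℝ) := by exact_mod_cast hm
  set M : ℝ := (m : ℝ) with hMdef
  have hM1 : 0 < M - 1 := by linarith
  have hM0 : 0 < M := by linarith
  have hG : 0 < Real.Gamma (M - 1) := Real.Gamma_pos_of_pos hM1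
  set G := Real.Gamma (M - 1) with hGdef
  have hΓm : Real.Gamma M = (M - 1) * G := by
    have h := Real.Gamma_add_one (show M - 1 ≠ 0 by linarith)
    rw [show M - 1 + 1 = M by ring] at h
    exact h
  have hΓM : 0 < Real.Gamma M := Real.Gamma_pos_of_pos hM0
  have hΓm1 : Real.Gamma (M + 1) = M * ((M - 1) * G) := by
    rw [Real.Gamma_add_one (ne_of_gt hM0), hΓm]
  set C : ℝ := B ^ m / Real.Gamma M with hCdef
  have hC : 0 < C := by positivity
  set φ : ℝ → ℝ → ℝ := fun r t => t ^ (r - 1) * Real.exp (-(B * t)) with hφdef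
  set ρ : ℝ → ℝ := fun t => B ^ m * t ^ (m - 1) * Real.exp (-(B * t)) / Real.Gamma M
    with hρdef
  set g : ℝ → ℝ := fun t => Real.exp (-(M * c / t)) with hgdef
  set e : ℝ := Real.exp (-(c * B)) with hedef
  have hcast : ((m - 1 : ℕ) : ℝ) = M - 1 := by
    rw [Nat.cast_sub (by omega)]; norm_num; rfl
  have hρφ : ∀ t ∈ Ioi (0 : ℝ), ρ t = C * φ M t := by
    intro t ht
    simp only [hρdef, hφdef, hCdef]
    rw [← hcast, Real.rpow_natCast]
    ring
  -- integrability of the φ's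
  have hIm1 : IntegrableOn (φ (M + 1)) (Ioi 0) := phi_integrable hB (by linarith)
  have hIm : IntegrableOn (φ M) (Ioi 0) := phi_integrable hB hM0
  have hIm2 : IntegrableOn (φ (M - 1)) (Ioi 0) := phi_integrable hB hM1
  have hρint : IntegrableOn ρ (Ioi 0) :=
    IntegrableOn.congr_fun (hIm.const_mul C) (fun t ht => (hρφ t ht).symm) measurableSet_Ioi
  have hρ0 : ∀ t ∈ Ioi (0 : ℝ), 0 ≤ ρ t := by
    intro t ht
    rw [hρφ t ht]
    exact mul_nonneg hC.le
      (mul_nonneg (Real.rpow_nonneg (le_of_lt ht) _) (Real.exp_pos _).le)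
  have hg0 : ∀ t ∈ Ioi (0 : ℝ), 0 ≤ g t := fun t _ => (Real.exp_pos _).le
  have hg1 : ∀ t ∈ Ioi (0 : ℝ), g t ≤ 1 := by
    intro t ht
    refine Real.exp_le_one_iff.2 ?_
    have ht0 : (0 : ℝ) < t := ht
    have : 0 ≤ M * c / t := by positivity
    linarith
  have hgmeas : Measurable (fun t : ℝ => g t * ρ t) := by
    simp only [hgdef, hρdef]
    fun_prop
  have hgρint : IntegrableOn (fun t => g t * ρ t) (Ioi 0) := by
    refine Integrable.mono' hρint hgmeas.aestronglyMeasurable ?_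
    rw [ae_restrict_iff' measurableSet_Ioi]
    filter_upwards with t ht
    have h1 := hg0 t ht; have h2 := hg1 t ht; have h3 := hρ0 t ht
    rw [Real.norm_eq_abs, abs_of_nonneg (mul_nonneg h1 h3)]
    nlinarith
  -- total mass 1
  have hρ1 : ∫ t in Ioi (0 : ℝ), ρ t = 1 := by
    rw [setIntegral_congr_fun measurableSet_Ioi hρφ, MeasureTheory.integral_const_mul,
      Real.integral_rpow_mul_exp_neg_mul_Ioi hM0 hB]
    have h1 : ((1 : ℝ) / B) ^ M = 1 / B ^ m := by
      rw [hMdef, Real.rpow_natCast, one_div, one_div, inv_pow]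
    rw [h1, hCdef]
    field_simp
  -- the dominating function
  set k1 : ℝ := C * c * B / (2 * A) with hk1
  set k2 : ℝ := C * c * M / A with hk2
  set k3 : ℝ := C * c * M ^ 2 / (2 * A * B) + C * c * B * A / 2 with hk3
  set ψ : ℝ → ℝ := fun t => k1 * φ (M + 1) t - k2 * φ M t + k3 * φ (M - 1) t with hψdef
  have hpoint : ∀ t ∈ Ioi (0 : ℝ), |(g t - e) * ρ t| ≤ ψ t := by
    intro t ht
    have ht0 : (0 : ℝ) < t := ht
    have habs1 : |g t - e| ≤ |M * c / t - c * B| := by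
      refine exp_neg_lip (by positivity) (by positivity)
    have heq : M * c / t - c * B = c * B * (M / B - t) / t := by
      field_simp
    have habs2 : |M * c / t - c * B| = c * B * |t - M / B| / t := by
      rw [heq, abs_div, abs_of_pos ht0, abs_mul, abs_of_nonneg (by positivity : (0:ℝ) ≤ c * B),
        abs_sub_comm]
    have habs3 : |t - M / B| ≤ (t - M / B) ^ 2 / (2 * A) + A / 2 := by
      have h' : 2 * A * |t - M / B| ≤ (t - M / B) ^ 2 + A ^ 2 := by
        nlinarith [sq_nonneg (|t - M / B| - A), sq_abs (t - M / B)]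
      have h2 : (t - M / B) ^ 2 / (2 * A) + A / 2 = ((t - M / B) ^ 2 + A ^ 2) / (2 * A) := by
        field_simp
      rw [h2, le_div_iff₀ (by positivity)]
      linarith
    have habs : |g t - e| ≤ c * B * ((t - M / B) ^ 2 / (2 * A) + A / 2) / t := by
      calc |g t - e| ≤ |M * c / t - c * B| := habs1
        _ = c * B * |t - M / B| / t := habs2
        _ ≤ c * B * ((t - M / B) ^ 2 / (2 * A) + A / 2) / t := by gcongr
    have hψeq : c * B * ((t - M / B) ^ 2 / (2 * A) + A / 2) / t * ρ t = ψ t := by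
      rw [hρφ t ht]
      have e1 : φ (M + 1) t = t ^ (M - 1) * t * Real.exp (-(B * t)) := by
        simp only [hφdef]
        rw [show M + 1 - 1 = M - 1 + 1 by ring, Real.rpow_add_one (ne_of_gt ht0)]
      have e2 : φ (M - 1) t = t ^ (M - 1) / t * Real.exp (-(B * t)) := by
        simp only [hφdef]
        rw [Real.rpow_sub_one (ne_of_gt ht0)]
      simp only [hψdef, hk1, hk2, hk3]
      rw [e1, e2]
      simp only [hφdef]
      generalize t ^ (M - 1) = X
      generalize Real.exp (-(B * t)) = E
      field_simp
      ring
    calc |(g t - e) * ρ t| = |g t - e| * ρ t := by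
          rw [abs_mul, abs_of_nonneg (hρ0 t ht)]
      _ ≤ c * B * ((t - M / B) ^ 2 / (2 * A) + A / 2) / t * ρ t :=
          mul_le_mul_of_nonneg_right habs (hρ0 t ht)
      _ = ψ t := hψeq
  have hψint : IntegrableOn ψ (Ioi 0) :=
    ((hIm1.const_mul k1).sub (hIm.const_mul k2)).add (hIm2.const_mul k3)
  have hdint : IntegrableOn (fun t => (g t - e) * ρ t) (Ioi 0) := by
    have : IntegrableOn (fun t => g t * ρ t - e * ρ t) (Ioi 0) :=
      hgρint.sub (hρint.const_mul e)
    refine this.congr_fun (fun t _ => by ring) measurableSet_Ioi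
  have hsub : ∫ t in Ioi (0 : ℝ), (g t - e) * ρ t
      = (∫ t in Ioi (0 : ℝ), g t * ρ t) - e := by
    have : ∀ t : ℝ, (g t - e) * ρ t = g t * ρ t - e * ρ t := fun t => by ring
    rw [MeasureTheory.integral_congr_ae (Filter.Eventually.of_forall this),
      MeasureTheory.integral_sub hgρint (hρint.const_mul e),
      MeasureTheory.integral_const_mul, hρ1, mul_one]
  have hABS : |(∫ t in Ioi (0 : ℝ), g t * ρ t) - e| ≤ ∫ t in Ioi (0 : ℝ), ψ t := by
    rw [← hsub]
    calc |∫ t in Ioi (0 : ℝ), (g t - e) * ρ t|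
        ≤ ∫ t in Ioi (0 : ℝ), |(g t - e) * ρ t| := by
          simpa only [Real.norm_eq_abs] using
            MeasureTheory.norm_integral_le_integral_norm (μ := volume.restrict (Ioi 0))
              (fun t => (g t - e) * ρ t)
      _ ≤ ∫ t in Ioi (0 : ℝ), ψ t :=
          setIntegral_mono_on hdint.abs hψint measurableSet_Ioi hpoint
  have hψval : ∫ t in Ioi (0 : ℝ), ψ t
      = c * M / (2 * A * (M - 1)) + c * A * B ^ 2 / (2 * (M - 1)) := by
    simp only [hψdef]
    have i1 : IntegrableOn (fun t => k1 * φ (M + 1) t) (Ioi 0) := hIm1.const_mul k1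
    have i2 : IntegrableOn (fun t => k2 * φ M t) (Ioi 0) := hIm.const_mul k2
    have i3 : IntegrableOn (fun t => k3 * φ (M - 1) t) (Ioi 0) := hIm2.const_mul k3
    have i12 : IntegrableOn (fun t => k1 * φ (M + 1) t - k2 * φ M t) (Ioi 0) := i1.sub i2
    rw [MeasureTheory.integral_add i12 i3,
      MeasureTheory.integral_sub i1 i2,
      MeasureTheory.integral_const_mul, MeasureTheory.integral_const_mul,
      MeasureTheory.integral_const_mul]
    simp only [hφdef]
    rw [Real.integral_rpow_mul_exp_neg_mul_Ioi (by linarith : (0:ℝ) < M + 1) hB,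
      Real.integral_rpow_mul_exp_neg_mul_Ioi hM0 hB,
      Real.integral_rpow_mul_exp_neg_mul_Ioi hM1 hB]
    have hBne : B ≠ 0 := ne_of_gt hB
    have hXm1 : ((1 : ℝ) / B) ^ (M - 1) = 1 / B ^ (m - 1) := by
      rw [← hcast, Real.rpow_natCast, one_div, one_div, inv_pow]
    have hXM : ((1 : ℝ) / B) ^ M = (1 / B ^ (m - 1)) * (1 / B) := by
      rw [show M = M - 1 + 1 by ring, Real.rpow_add_one (by positivity), hXm1]
    have hXM1 : ((1 : ℝ) / B) ^ (M + 1) = (1 / B ^ (m - 1)) * (1 / B) * (1 / B) := by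
      rw [Real.rpow_add_one (by positivity : (1:ℝ)/B ≠ 0), hXM]
    have hBm : B ^ m = B ^ (m - 1) * B := by
      conv_lhs => rw [show m = (m - 1) + 1 by omega]
      rw [pow_succ]
    have hBm1 : (0:ℝ) < B ^ (m - 1) := by positivity
    rw [hXm1, hXM, hXM1, hΓm1, hΓm, hk1, hk2, hk3, hCdef, hΓm, hBm]
    have hGne : G ≠ 0 := ne_of_gt hG
    have hM1ne : M - 1 ≠ 0 := ne_of_gt hM1
    have hAne : A ≠ 0 := ne_of_gt hA
    field_simp
    ring
  calc |(∫ t in Ioi (0 : ℝ), g t * ρ t) - e|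
      ≤ ∫ t in Ioi (0 : ℝ), ψ t := hABS
    _ = c * M / (2 * A * (M - 1)) + c * A * B ^ 2 / (2 * (M - 1)) := hψval

/-- Theorem 4, part ii: if `Tₘ ~ Gamma(shape m, rate B)` then
`E[exp(-m c / Tₘ)] → exp(-c B)` as `m → ∞`; the MLE of the CDF based on `m` lower record
values is asymptotically unbiased. -/
theorem cdf_mle_asymptotically_unbiased (B c : ℝ) (hB : 0 < B) (hc : 0 ≤ c) :
    Tendsto (fun m : ℕ =>
        ∫ t in Set.Ioi (0 : ℝ), Real.exp (-((m : ℝ) * c / t)) *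
          (B ^ m * t ^ (m - 1) * Real.exp (-(B * t)) / Real.Gamma (m : ℝ)))
      atTop (nhds (Real.exp (-(c * B)))) := by
  rw [Metric.tendsto_atTop]
  intro ε hε
  set A : ℝ := c / ε + 1 with hAdef
  have hA : 0 < A := by positivity
  -- the bounding sequence tends to c/(2A)
  have h0 : Tendsto (fun m : ℕ => (m : ℝ) - 1) atTop atTop :=
    (tendsto_atTop_add_const_right atTop (-1) tendsto_natCast_atTop_atTop).congr
      (fun m => by rw [sub_eq_add_neg])
  have h1 : Tendsto (fun m : ℕ => ((m : ℝ) - 1)⁻¹) atTop (nhds 0) :=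
    h0.inv_tendsto_atTop
  have hquot : Tendsto (fun m : ℕ => (m : ℝ) / ((m : ℝ) - 1)) atTop (nhds 1) := by
    have h2 : Tendsto (fun m : ℕ => 1 + ((m : ℝ) - 1)⁻¹) atTop (nhds (1 + 0)) :=
      tendsto_const_nhds.add h1
    rw [add_zero] at h2
    refine h2.congr' ?_
    filter_upwards [eventually_ge_atTop 2] with m hm
    have hm1 : ((m : ℝ) - 1) ≠ 0 := by
      have : (2 : ℝ) ≤ (m : ℝ) := by exact_mod_cast hm
      linarith
    field_simp
    ring
  have hterm1 : Tendsto (fun m : ℕ => c * (m : ℝ) / (2 * A * ((m : ℝ) - 1))) atTop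
      (nhds (c / (2 * A))) := by
    have := hquot.const_mul (c / (2 * A))
    rw [mul_one] at this
    exact this.congr (fun m => by simp only [div_eq_mul_inv, mul_inv]; ring)
  have hterm2 : Tendsto (fun m : ℕ => c * A * B ^ 2 / (2 * ((m : ℝ) - 1))) atTop
      (nhds 0) := by
    have := h1.const_mul (c * A * B ^ 2 / 2)
    rw [mul_zero] at this
    exact this.congr (fun m => by simp only [div_eq_mul_inv, mul_inv]; ring)
  have hlim : Tendsto (fun m : ℕ => c * (m : ℝ) / (2 * A * ((m : ℝ) - 1))
      + c * A * B ^ 2 / (2 * ((m : ℝ) - 1))) atTop (nhds (c / (2 * A) + 0)) :=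
    hterm1.add hterm2
  rw [add_zero] at hlim
  have hlt : c / (2 * A) < ε := by
    have he : ε * (2 * (c / ε + 1)) = 2 * c + 2 * ε := by
      field_simp
    rw [div_lt_iff₀ (by positivity)]
    calc c ≤ 2 * c + ε := by linarith
      _ < 2 * c + 2 * ε := by linarith
      _ = ε * (2 * A) := by rw [hAdef, he]
  have hev := (hlim.eventually_lt_const hlt).and (eventually_ge_atTop 2)
  rw [eventually_atTop] at hev
  obtain ⟨N, hN⟩ := hev
  refine ⟨N, fun n hn => ?_⟩
  obtain ⟨hb, hn2⟩ := hN n hn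
  rw [Real.dist_eq]
  calc |(∫ t in Set.Ioi (0 : ℝ), Real.exp (-((n : ℝ) * c / t)) *
          (B ^ n * t ^ (n - 1) * Real.exp (-(B * t)) / Real.Gamma (n : ℝ)))
        - Real.exp (-(c * B))|
      ≤ c * (n : ℝ) / (2 * A * ((n : ℝ) - 1)) + c * A * B ^ 2 / (2 * ((n : ℝ) - 1)) :=
        key_bound B c A hB hc hA n hn2
    _ < ε := hb
end

section
/- (Theorem 4, part i) Let B > 0 and c ≥ 0. Then lim_{m→∞} ∫₀^∞ (m/t) · exp(−m·c/t) · B^m t^{m−1} e^{−Bt}/Γ(m) dt = B · exp(−c·B). That is, if Tₘ ~ Gamma(shape m, rate B), then E[(m/Tₘ)·exp(−m·c/Tₘ)] → B·exp(−c·B) as m → ∞; hence the MLE f̂ of the density f(x;θ) = −A′(x)B(θ)exp(−B(θ)A(x)) based on m lower record values is asymptotically unbiased. -/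
open MeasureTheory Filter Set Topology

lemma intOn_pow_exp (n : ℕ) {r : ℝ} (hr : 0 < r) :
    IntegrableOn (fun t : ℝ => t ^ n * Real.exp (-(r * t))) (Set.Ioi 0) := by
  have h := integrableOn_rpow_mul_exp_neg_mul_rpow (p := 1) (s := (n : ℝ)) (b := r)
    (by exact lt_of_lt_of_le (by norm_num) (Nat.cast_nonneg n)) (by norm_num) hr
  refine h.congr_fun (fun t ht => ?_) measurableSet_Ioi
  beta_reduce
  rw [Real.rpow_one, Real.rpow_natCast, neg_mul]

lemma int_pow_exp (n : ℕ) {r : ℝ} (hr : 0 < r) :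
    ∫ t in Set.Ioi (0:ℝ), t ^ n * Real.exp (-(r * t)) = (n.factorial : ℝ) / r ^ (n+1) := by
  have h := Real.integral_rpow_mul_exp_neg_mul_Ioi (a := (n : ℝ) + 1) (by positivity) hr
  rw [setIntegral_congr_fun measurableSet_Ioi
    (show Set.EqOn (fun t : ℝ => t ^ n * Real.exp (-(r * t)))
      (fun t : ℝ => t ^ ((n : ℝ) + 1 - 1) * Real.exp (-(r * t))) (Set.Ioi 0) from
      fun t ht => by
        show t ^ n * Real.exp (-(r * t)) = t ^ ((n:ℝ) + 1 - 1) * Real.exp (-(r * t))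
        rw [show (n : ℝ) + 1 - 1 = ((n : ℕ) : ℝ) by push_cast; ring, Real.rpow_natCast]), h,
    Real.Gamma_nat_eq_factorial,
    show ((n : ℝ) + 1) = ((n + 1 : ℕ) : ℝ) by push_cast; ring, Real.rpow_natCast, div_pow, one_pow]
  ring

lemma momentInt {B : ℝ} (hB : 0 < B) (k j : ℕ) :
    IntegrableOn (fun t : ℝ => t ^ j *
      (B ^ (k+1) * t ^ k * Real.exp (-(B * t)) / Real.Gamma ((k+1 : ℕ) : ℝ))) (Set.Ioi 0) := by
  have h0 : IntegrableOn (fun t : ℝ => (B ^ (k+1) / Real.Gamma ((k+1 : ℕ) : ℝ)) *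
      (t ^ (k+j) * Real.exp (-(B * t)))) (Set.Ioi 0) :=
    (intOn_pow_exp (k+j) hB).const_mul _
  refine h0.congr_fun (fun t ht => ?_) measurableSet_Ioi
  show _ = t ^ j * (B ^ (k+1) * t ^ k * Real.exp (-(B * t)) / Real.Gamma ((k+1 : ℕ) : ℝ))
  rw [pow_add]; ring

lemma moment {B : ℝ} (hB : 0 < B) (k j : ℕ) :
    ∫ t in Set.Ioi (0:ℝ), t ^ j *
      (B ^ (k+1) * t ^ k * Real.exp (-(B * t)) / Real.Gamma ((k+1 : ℕ) : ℝ))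
      = ((k+j).factorial : ℝ) / ((k.factorial : ℝ) * B ^ j) := by
  have hΓ : Real.Gamma ((k+1 : ℕ) : ℝ) = (k.factorial : ℝ) := by
    push_cast; exact Real.Gamma_nat_eq_factorial k
  rw [setIntegral_congr_fun measurableSet_Ioi
    (show Set.EqOn (fun t : ℝ => t ^ j *
        (B ^ (k+1) * t ^ k * Real.exp (-(B * t)) / Real.Gamma ((k+1 : ℕ) : ℝ)))
      (fun t : ℝ => (B ^ (k+1) / Real.Gamma ((k+1 : ℕ) : ℝ)) *
        (t ^ (k+j) * Real.exp (-(B * t)))) (Set.Ioi 0) from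
      fun t ht => by
        show t ^ j * (B ^ (k+1) * t ^ k * Real.exp (-(B * t)) / Real.Gamma ((k+1 : ℕ) : ℝ)) = _
        rw [pow_add]; ring),
    integral_const_mul, int_pow_exp _ hB, hΓ]
  have h1 : (B:ℝ) ^ (k + j + 1) = B ^ (k+1) * B ^ j := by rw [← pow_add]; ring_nf
  rw [h1]
  have hf : (0:ℝ) < k.factorial := by positivity
  field_simp

lemma var_eq {B : ℝ} (hB : 0 < B) (k : ℕ) :
    ∫ t in Set.Ioi (0:ℝ), (t - ((k:ℝ)+1)/B)^2 *
      (B ^ (k+1) * t ^ k * Real.exp (-(B * t)) / Real.Gamma ((k+1 : ℕ) : ℝ))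
      = ((k:ℝ)+1)/B^2 := by
  set g : ℝ → ℝ := fun t => B ^ (k+1) * t ^ k * Real.exp (-(B * t)) / Real.Gamma ((k+1 : ℕ) : ℝ)
    with hg
  set a : ℝ := ((k:ℝ)+1)/B with ha
  have key : Set.EqOn (fun t : ℝ => (t - a)^2 * g t)
      (fun t : ℝ => t ^ 2 * g t - (2*a) * (t ^ 1 * g t) + (a^2) * (t ^ 0 * g t)) (Set.Ioi 0) :=
    fun t ht => by show (t - a)^2 * g t = _; ring
  rw [setIntegral_congr_fun measurableSet_Ioi key, integral_add, integral_sub,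
    integral_const_mul, integral_const_mul, moment hB k 2, moment hB k 1, moment hB k 0]
  · have hBne : B ≠ 0 := hB.ne'
    simp only [Nat.factorial_succ, Nat.add_zero, ha]
    push_cast
    field_simp
    ring
  · exact momentInt hB k 2
  · exact (momentInt hB k 1).const_mul _
  · exact ((momentInt hB k 2).sub ((momentInt hB k 1).const_mul _))
  · exact (momentInt hB k 0).const_mul _

/-- Theorem 4, part i: if `Tₘ ~ Gamma(shape m, rate B)` then
`E[(m / Tₘ) exp(-m c / Tₘ)] → B exp(-c B)` as `m → ∞`; the MLE of the density based on `m`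
lower record values is asymptotically unbiased. -/
theorem pdf_mle_asymptotically_unbiased (B c : ℝ) (hB : 0 < B) (hc : 0 ≤ c) :
    Tendsto (fun m : ℕ =>
        ∫ t in Set.Ioi (0 : ℝ), ((m : ℝ) / t) * Real.exp (-((m : ℝ) * c / t)) *
          (B ^ m * t ^ (m - 1) * Real.exp (-(B * t)) / Real.Gamma (m : ℝ)))
      atTop (nhds (B * Real.exp (-(c * B)))) := by
  rcases eq_or_lt_of_le hc with rfl | hc0
  ·
    have hlim : Tendsto (fun m : ℕ => (m:ℝ)/((m:ℝ) + (-1)) * B) atTop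
        (𝓝 (B * Real.exp (-(0 * B)))) := by
      have h1 := tendsto_natCast_div_add_atTop (𝕜 := ℝ) (-1)
      have h2 := h1.mul_const B
      rw [one_mul] at h2
      have h3 : B * Real.exp (-(0 * B)) = B := by simp
      rw [h3]
      exact h2
    refine Tendsto.congr' ?_ hlim
    filter_upwards [eventually_ge_atTop 2] with m hm
    obtain ⟨k, rfl⟩ : ∃ k, m = k + 2 := ⟨m - 2, by omega⟩
    symm
    have hΓ : Real.Gamma (((k+2 : ℕ)) : ℝ) = ((k+1).factorial : ℝ) := by
      push_cast [show ((k:ℝ) + 2) = ((k:ℝ)+1) + 1 by ring]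
      have := Real.Gamma_nat_eq_factorial (k+1)
      push_cast at this
      exact this
    have hΓpos : (0:ℝ) < Real.Gamma (((k+2 : ℕ)) : ℝ) := by rw [hΓ]; positivity
    have key : Set.EqOn
        (fun t : ℝ => (((k+2:ℕ)) : ℝ) / t * Real.exp (-((((k+2:ℕ)):ℝ) * 0 / t)) *
          (B ^ (k+2) * t ^ (k+2-1) * Real.exp (-(B * t)) / Real.Gamma (((k+2:ℕ)) : ℝ)))
        (fun t : ℝ => ((((k+2:ℕ)):ℝ) * B ^ (k+2) / Real.Gamma (((k+2:ℕ)) : ℝ)) *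
          (t ^ k * Real.exp (-(B * t)))) (Set.Ioi 0) := by
      intro t ht
      have ht0 : (t:ℝ) ≠ 0 := ne_of_gt ht
      show (((k+2:ℕ)) : ℝ) / t * Real.exp (-((((k+2:ℕ)):ℝ) * 0 / t)) *
          (B ^ (k+2) * t ^ (k+2-1) * Real.exp (-(B * t)) / Real.Gamma (((k+2:ℕ)) : ℝ)) = _
      rw [mul_zero, zero_div, neg_zero, Real.exp_zero, show k+2-1 = k+1 from rfl, pow_succ]
      field_simp
      ring
    calc (∫ t in Set.Ioi (0:ℝ), (((k+2:ℕ)) : ℝ) / t * Real.exp (-((((k+2:ℕ)):ℝ) * 0 / t)) *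
          (B ^ (k+2) * t ^ (k+2-1) * Real.exp (-(B * t)) / Real.Gamma (((k+2:ℕ)) : ℝ)))
        = ((((k+2:ℕ)):ℝ) * B ^ (k+2) / Real.Gamma (((k+2:ℕ)) : ℝ)) *
          ((k.factorial : ℝ) / B ^ (k+1)) := by
          rw [setIntegral_congr_fun measurableSet_Ioi key, integral_const_mul, int_pow_exp _ hB]
      _ = (((k+2:ℕ)):ℝ) / ((((k+2:ℕ)):ℝ) + (-1)) * B := by
          rw [hΓ]
          have hBne : B ≠ 0 := hB.ne'
          have h2 : ((k+1).factorial : ℝ) = ((k:ℝ)+1) * (k.factorial : ℝ) := by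
            rw [Nat.factorial_succ]; push_cast; ring
          have hk0 : (0:ℝ) ≤ (k:ℝ) := Nat.cast_nonneg k
          rw [div_mul_div_comm, div_mul_eq_mul_div, div_eq_div_iff (by positivity)
            (by push_cast; linarith)]
          rw [h2]
          push_cast
          rw [pow_succ]
          ring
  ·
    set L := B * Real.exp (-(c * B)) with hLdef
    set H : ℝ → ℝ := fun s => (1/s) * Real.exp (-(c/s)) with hHdef
    set M : ℝ := 1/(Real.exp 1 * c) with hMdef
    have hM : 0 < M := by positivity
    set K : ℝ := M + |L| with hKdef
    have hK0 : 0 < K := by positivity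
    have hHnn : ∀ s : ℝ, 0 < s → 0 ≤ H s := by
      intro s hs
      have : (0:ℝ) < 1/s := by positivity
      exact mul_nonneg this.le (Real.exp_pos _).le
    have hHM : ∀ s : ℝ, 0 < s → H s ≤ M := by
      intro s hs
      have hy : 0 < c/s := by positivity
      have h2 : (c/s) ≤ Real.exp (c/s - 1) := by linarith [Real.add_one_le_exp (c/s - 1)]
      have h3 : Real.exp 1 * (c/s) ≤ Real.exp 1 * Real.exp (c/s - 1) :=
        mul_le_mul_of_nonneg_left h2 (Real.exp_pos 1).le
      rw [← Real.exp_add, show (1:ℝ) + (c/s - 1) = c/s by ring] at h3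
      show (1/s) * Real.exp (-(c/s)) ≤ 1/(Real.exp 1 * c)
      rw [Real.exp_neg, one_div, one_div, ← mul_inv]
      refine inv_anti₀ (by positivity) ?_
      calc Real.exp 1 * c = s * (Real.exp 1 * (c/s)) := by field_simp
        _ ≤ s * Real.exp (c/s) := mul_le_mul_of_nonneg_left h3 hs.le
    have hB1 : (1/B : ℝ) ≠ 0 := by positivity
    have hcont : ContinuousAt H (1/B) := by
      have h1 : ContinuousAt (fun s : ℝ => 1/s) (1/B) :=
        continuousAt_const.div continuousAt_id hB1
      have h2 : ContinuousAt (fun s : ℝ => c/s) (1/B) :=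
        continuousAt_const.div continuousAt_id hB1
      exact h1.mul ((Real.continuous_exp.continuousAt).comp h2.neg)
    have hHL : H (1/B) = L := by
      show (1/(1/B)) * Real.exp (-(c/(1/B))) = B * Real.exp (-(c*B))
      rw [one_div_one_div, div_div_eq_mul_div, div_one]
    rw [Metric.tendsto_atTop]
    intro ε hε
    obtain ⟨δ, hδ, hδ'⟩ := Metric.continuousAt_iff.mp hcont (ε/2) (by positivity)
    obtain ⟨N0, hN0⟩ := exists_nat_gt (2*K/(ε * B^2 * δ^2))
    refine ⟨max N0 1, fun m hm => ?_⟩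
    have hm1 : 1 ≤ m := le_trans (le_max_right _ _) hm
    have hmN0 : N0 ≤ m := le_trans (le_max_left _ _) hm
    obtain ⟨k, rfl⟩ : ∃ k, m = k + 1 := ⟨m - 1, by omega⟩
    simp only [Nat.add_sub_cancel]
    set m' : ℝ := ((k+1 : ℕ) : ℝ) with hm'def
    have hm'pos : (0:ℝ) < m' := by rw [hm'def]; exact_mod_cast Nat.succ_pos k
    set g : ℝ → ℝ := fun t => B ^ (k+1) * t ^ k * Real.exp (-(B*t)) / Real.Gamma ((k+1:ℕ) : ℝ)
      with hgdef
    set f : ℝ → ℝ := fun t => (m'/t) * Real.exp (-(m'*c/t)) * g t with hfdef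
    show dist (∫ t in Set.Ioi (0:ℝ), f t) L < ε
    have hΓpos : 0 < Real.Gamma ((k+1:ℕ):ℝ) := Real.Gamma_pos_of_pos (by positivity)
    have hgpos : ∀ t ∈ Set.Ioi (0:ℝ), 0 ≤ g t := by
      intro t ht
      have ht' : (0:ℝ) < t := ht
      exact div_nonneg (mul_nonneg (mul_nonneg (by positivity) (pow_nonneg ht'.le k))
        (Real.exp_pos _).le) hΓpos.le
    have hfH : ∀ t ∈ Set.Ioi (0:ℝ), f t = H (t/m') * g t := by
      intro t ht
      show (m'/t) * Real.exp (-(m'*c/t)) * g t = (1/(t/m')) * Real.exp (-(c/(t/m'))) * g t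
      rw [one_div_div, div_div_eq_mul_div, mul_comm c m']
    have ig0 : IntegrableOn g (Set.Ioi 0) := by
      refine (momentInt hB k 0).congr_fun (fun t ht => ?_) measurableSet_Ioi
      show t ^ 0 * g t = g t
      rw [pow_zero, one_mul]
    have hint1 : ∫ t in Set.Ioi (0:ℝ), g t = 1 := by
      rw [setIntegral_congr_fun measurableSet_Ioi
        (show Set.EqOn g (fun t : ℝ => t ^ 0 * g t) (Set.Ioi 0) from
          fun t ht => by show g t = t ^ 0 * g t; rw [pow_zero, one_mul]),
        moment hB k 0]
      simp only [Nat.add_zero, pow_zero, mul_one]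
      exact div_self (Nat.cast_ne_zero.mpr k.factorial_ne_zero)
    have ivar : IntegrableOn (fun t : ℝ => (t - m'/B)^2 * g t) (Set.Ioi 0) := by
      have h : IntegrableOn (fun t : ℝ =>
          t ^ 2 * (B ^ (k+1) * t ^ k * Real.exp (-(B*t)) / Real.Gamma ((k+1:ℕ) : ℝ))
          - 2*(m'/B) * (t ^ 1 * (B ^ (k+1) * t ^ k * Real.exp (-(B*t)) / Real.Gamma ((k+1:ℕ) : ℝ)))
          + (m'/B)^2 * (t ^ 0 * (B ^ (k+1) * t ^ k * Real.exp (-(B*t)) / Real.Gamma ((k+1:ℕ) : ℝ))))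
          (Set.Ioi 0) :=
        ((momentInt hB k 2).sub ((momentInt hB k 1).const_mul (2*(m'/B)))).add
          ((momentInt hB k 0).const_mul ((m'/B)^2))
      refine h.congr_fun (fun t ht => ?_) measurableSet_Ioi
      show _ = (t - m'/B)^2 * g t
      ring
    have hvar : ∫ t in Set.Ioi (0:ℝ), (t - m'/B)^2 * g t = m'/B^2 := by
      have hm'' : m' = (k:ℝ)+1 := by rw [hm'def]; push_cast; ring
      rw [hm'']
      exact var_eq hB k
    have iaesm : AEStronglyMeasurable f (volume.restrict (Set.Ioi 0)) := by
      have : Measurable f := by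
        apply Measurable.mul
        apply Measurable.mul
        · exact measurable_const.div measurable_id
        · exact Real.measurable_exp.comp ((measurable_const.div measurable_id).neg)
        · exact ((measurable_const.mul ((measurable_id.pow_const k))).mul
            (Real.measurable_exp.comp ((measurable_const.mul measurable_id).neg))).div
            measurable_const
      exact this.aestronglyMeasurable
    have if_ : IntegrableOn f (Set.Ioi 0) := by
      refine Integrable.mono' (ig0.const_mul M) iaesm ?_
      filter_upwards [ae_restrict_mem measurableSet_Ioi] with t ht
      have htm : 0 < t/m' := div_pos ht hm'pos
      rw [Real.norm_eq_abs, hfH t ht, abs_of_nonneg (mul_nonneg (hHnn _ htm) (hgpos t ht))]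
      exact mul_le_mul_of_nonneg_right (hHM _ htm) (hgpos t ht)
    have master : ∀ t ∈ Set.Ioi (0:ℝ),
        |f t - L * g t| ≤ (ε/2) * g t + (K/(m'*δ)^2) * ((t - m'/B)^2 * g t) := by
      intro t ht
      have hg := hgpos t ht
      have htm : 0 < t/m' := div_pos ht hm'pos
      have habs : |f t - L * g t| = |H (t/m') - L| * g t := by
        rw [hfH t ht, ← sub_mul, abs_mul, abs_of_nonneg hg]
      rw [habs]
      by_cases hcase : |t/m' - 1/B| < δ
      · have h0 := hδ' (show dist (t/m') (1/B) < δ by rwa [Real.dist_eq])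
        rw [Real.dist_eq, hHL] at h0
        have h1 : |H (t/m') - L| * g t ≤ (ε/2) * g t :=
          mul_le_mul_of_nonneg_right h0.le hg
        have h2 : 0 ≤ (K/(m'*δ)^2) * ((t - m'/B)^2 * g t) := by
          have := sq_nonneg (t - m'/B)
          positivity
        linarith
      · push_neg at hcase
        have hKb : |H (t/m') - L| ≤ K := by
          rw [abs_le, hKdef]
          have h1 := hHnn _ htm
          have h2 := hHM _ htm
          have h3 := le_abs_self L
          have h4 := neg_abs_le L
          constructor <;> [skip; skip] <;> linarith
        have hsq : (m'*δ)^2 ≤ (t - m'/B)^2 := by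
          have h2 : |t - m'/B| = m' * |t/m' - 1/B| := by
            rw [show m' * |t/m' - 1/B| = |m'| * |t/m' - 1/B| by rw [abs_of_pos hm'pos],
              ← abs_mul]
            congr 1
            field_simp
          have h1 : m' * δ ≤ |t - m'/B| := by
            rw [h2]
            exact mul_le_mul_of_nonneg_left hcase hm'pos.le
          calc (m'*δ)^2 ≤ |t - m'/B|^2 := pow_le_pow_left₀ (by positivity) h1 2
            _ = (t - m'/B)^2 := sq_abs _
        have hne : ((m'*δ)^2 : ℝ) ≠ 0 := by positivity
        have h3 : |H (t/m') - L| * g t ≤ K * g t := mul_le_mul_of_nonneg_right hKb hg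
        have h4 : K * g t ≤ (K/(m'*δ)^2) * ((t - m'/B)^2 * g t) := by
          calc K * g t = (K/(m'*δ)^2) * ((m'*δ)^2 * g t) := by field_simp
            _ ≤ (K/(m'*δ)^2) * ((t - m'/B)^2 * g t) :=
              mul_le_mul_of_nonneg_left (mul_le_mul_of_nonneg_right hsq hg) (by positivity)
        have h6 : 0 ≤ (ε/2) * g t := by positivity
        linarith
    have key1 : dist (∫ t in Set.Ioi (0:ℝ), f t) L = |∫ t in Set.Ioi (0:ℝ), (f t - L * g t)| := by
      rw [Real.dist_eq, integral_sub if_ (ig0.const_mul L), integral_const_mul, hint1, mul_one]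
    have key2 : |∫ t in Set.Ioi (0:ℝ), (f t - L * g t)| ≤
        ∫ t in Set.Ioi (0:ℝ), |f t - L * g t| := by
      have := norm_integral_le_integral_norm (μ := volume.restrict (Set.Ioi 0))
        (f := fun t => f t - L * g t)
      simpa [Real.norm_eq_abs] using this
    have key3 : ∫ t in Set.Ioi (0:ℝ), |f t - L * g t| ≤
        ∫ t in Set.Ioi (0:ℝ), ((ε/2) * g t + (K/(m'*δ)^2) * ((t - m'/B)^2 * g t)) := by
      refine integral_mono_of_nonneg ?_ ((ig0.const_mul _).add (ivar.const_mul _)) ?_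
      · filter_upwards with t using abs_nonneg _
      · filter_upwards [ae_restrict_mem measurableSet_Ioi] with t ht using master t ht
    have key4 : ∫ t in Set.Ioi (0:ℝ), ((ε/2) * g t + (K/(m'*δ)^2) * ((t - m'/B)^2 * g t))
        = ε/2 + (K/(m'*δ)^2) * (m'/B^2) := by
      rw [integral_add (ig0.const_mul _) (ivar.const_mul _), integral_const_mul,
        integral_const_mul, hint1, hvar, mul_one]
    have hm'ge : (N0:ℝ) ≤ m' := by rw [hm'def]; exact_mod_cast hmN0
    have hδne : δ ≠ 0 := hδ.ne'
    have hfin : (K/(m'*δ)^2) * (m'/B^2) < ε/2 := by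
      have heq : (K/(m'*δ)^2) * (m'/B^2) = K/(m' * B^2 * δ^2) := by
        field_simp
      rw [heq, div_lt_iff₀ (by positivity)]
      have h7 : 2*K < (N0:ℝ) * (ε*B^2*δ^2) :=
        (div_lt_iff₀ (by positivity : (0:ℝ) < ε*B^2*δ^2)).mp hN0
      have h8 : (N0:ℝ) * (ε*B^2*δ^2) ≤ m' * (ε*B^2*δ^2) :=
        mul_le_mul_of_nonneg_right hm'ge (by positivity)
      nlinarith
    calc dist (∫ t in Set.Ioi (0:ℝ), f t) L = |∫ t in Set.Ioi (0:ℝ), (f t - L * g t)| := key1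
      _ ≤ ∫ t in Set.Ioi (0:ℝ), |f t - L * g t| := key2
      _ ≤ ∫ t in Set.Ioi (0:ℝ), ((ε/2) * g t + (K/(m'*δ)^2) * ((t - m'/B)^2 * g t)) := key3
      _ = ε/2 + (K/(m'*δ)^2) * (m'/B^2) := key4
      _ < ε/2 + ε/2 := by linarith
      _ = ε := by ring
end

section
/- Let B > 0 and c ≥ 0. Then lim_{m→∞} ∫₀^∞ exp(−2m·c/t) · B^m t^{m−1} e^{−Bt}/Γ(m) dt = exp(−2c·B). That is, if Tₘ ~ Gamma(shape m, rate B), then the second moment E[(exp(−m·c/Tₘ))²] of the MLE of the CDF converges to (exp(−c·B))², so the variance of the CDF estimator tends to 0 as m → ∞. -/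
open MeasureTheory Filter


lemma exp_tangent (x y : ℝ) :
    Real.exp (-y) - Real.exp (-y) * (x - y) ≤ Real.exp (-x) := by
  have hE : Real.exp (-y) * Real.exp (-(x - y)) = Real.exp (-x) := by
    rw [← Real.exp_add]; ring_nf
  nlinarith [Real.add_one_le_exp (-(x - y)), Real.exp_pos (-y)]

lemma exp_upper (x y : ℝ) (hx : 0 ≤ x) (hy : 0 ≤ y) :
    Real.exp (-x) ≤ Real.exp (-y) - Real.exp (-y) * (x - y) + (x - y) ^ 2 := by
  have hE : Real.exp (-y) * Real.exp (-(x - y)) = Real.exp (-x) := by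
    rw [← Real.exp_add]; ring_nf
  have hy1 : Real.exp (-y) ≤ 1 := Real.exp_le_one_iff.mpr (by linarith)
  have hx1 : Real.exp (-x) ≤ 1 := Real.exp_le_one_iff.mpr (by linarith)
  rcases le_or_gt y x with h | h
  · have h2 : Real.exp (-(x - y)) * (1 + (x - y)) ≤ 1 := by
      have := mul_le_mul_of_nonneg_left (Real.add_one_le_exp (x - y))
        (Real.exp_pos (-(x - y))).le
      rw [← Real.exp_add, neg_add_cancel, Real.exp_zero] at this
      linarith
    nlinarith [Real.add_one_le_exp (-(x - y)), Real.exp_pos (-(x - y)), Real.exp_pos (-y)]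
  · have h1 : Real.exp (-x) * (1 + (x - y)) ≤ Real.exp (-y) := by
      have h0 := mul_le_mul_of_nonneg_left (Real.add_one_le_exp (x - y)) (Real.exp_pos (-x)).le
      rw [← Real.exp_add] at h0
      have h0' : Real.exp (-x) * (x - y + 1) ≤ Real.exp (-y) := by
        rw [show -x + (x - y) = -y by ring] at h0; exact h0
      linarith
    nlinarith [Real.exp_pos (-x), Real.exp_pos (-y)]

lemma moment_int {B : ℝ} (hB : 0 < B) (k : ℕ) :
    IntegrableOn (fun t : ℝ => t ^ k * Real.exp (-(B * t))) (Set.Ioi 0) := by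
  have h := integrableOn_rpow_mul_exp_neg_mul_rpow (s := (k : ℝ)) (p := 1) (b := B)
    (lt_of_lt_of_le neg_one_lt_zero (Nat.cast_nonneg k)) zero_lt_one hB
  refine h.congr_fun (fun x hx => ?_) measurableSet_Ioi
  beta_reduce
  rw [Real.rpow_natCast, Real.rpow_one, neg_mul]

lemma moment_eq {B : ℝ} (hB : 0 < B) {n : ℕ} (hn : 0 < n) :
    ∫ t in Set.Ioi (0 : ℝ), t ^ (n - 1) * Real.exp (-(B * t))
      = Real.Gamma (n : ℝ) / B ^ n := by
  have h := Real.integral_rpow_mul_exp_neg_mul_Ioi (a := (n : ℝ)) (r := B)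
    (by exact_mod_cast hn) hB
  have hc : ∀ t ∈ Set.Ioi (0 : ℝ),
      t ^ ((n : ℝ) - 1) * Real.exp (-(B * t)) = t ^ (n - 1) * Real.exp (-(B * t)) := by
    intro t ht
    congr 1
    rw [show ((n : ℝ) - 1) = ((n - 1 : ℕ) : ℝ) by
      push_cast [Nat.cast_sub hn]; ring, Real.rpow_natCast]
  rw [setIntegral_congr_fun measurableSet_Ioi hc] at h
  rw [h, Real.rpow_natCast, one_div, inv_pow, div_eq_inv_mul]

noncomputable def loF (B c : ℝ) (m : ℕ) : ℝ :=
  Real.exp (-(2*c*B)) + 2*c*B*Real.exp (-(2*c*B))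
    - 2*c*B*Real.exp (-(2*c*B)) * ((m:ℝ)/((m:ℝ)-1))

noncomputable def hiF (B c : ℝ) (m : ℕ) : ℝ :=
  loF B c m + 4*c^2*B^2*(((m:ℝ)/((m:ℝ)-1))*((m:ℝ)/((m:ℝ)-2)))
    - 8*c^2*B^2*((m:ℝ)/((m:ℝ)-1)) + 4*c^2*B^2

set_option maxHeartbeats 1600000 in
lemma sandwich (B c : ℝ) (hB : 0 < B) (hc : 0 ≤ c) {m : ℕ} (hm : 3 ≤ m) :
    loF B c m ≤ (∫ t in Set.Ioi (0 : ℝ), Real.exp (-(2 * (m : ℝ) * c / t)) *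
          (B ^ m * t ^ (m - 1) * Real.exp (-(B * t)) / Real.Gamma (m : ℝ))) ∧
    (∫ t in Set.Ioi (0 : ℝ), Real.exp (-(2 * (m : ℝ) * c / t)) *
          (B ^ m * t ^ (m - 1) * Real.exp (-(B * t)) / Real.Gamma (m : ℝ))) ≤ hiF B c m := by
  have hm3 : (3:ℝ) ≤ (m:ℝ) := by exact_mod_cast hm
  have hm1 : (0:ℝ) < (m:ℝ) - 1 := by linarith
  have hm2 : (0:ℝ) < (m:ℝ) - 2 := by linarith
  have hmR : (0:ℝ) < (m:ℝ) := by linarith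
  have hΓ : 0 < Real.Gamma (m:ℝ) := Real.Gamma_pos_of_pos hmR
  have hΓ1 : 0 < Real.Gamma ((m:ℝ) - 1) := Real.Gamma_pos_of_pos hm1
  have hΓ2 : 0 < Real.Gamma ((m:ℝ) - 2) := Real.Gamma_pos_of_pos hm2
  have hg1 : Real.Gamma (m:ℝ) = ((m:ℝ)-1) * Real.Gamma ((m:ℝ)-1) := by
    have := Real.Gamma_add_one (s := (m:ℝ)-1) hm1.ne'
    rwa [sub_add_cancel] at this
  have hg2 : Real.Gamma ((m:ℝ)-1) = ((m:ℝ)-2) * Real.Gamma ((m:ℝ)-2) := by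
    have := Real.Gamma_add_one (s := (m:ℝ)-2) hm2.ne'
    rwa [show (m:ℝ)-2+1 = (m:ℝ)-1 by ring] at this
  obtain ⟨C, hCdef⟩ : ∃ C : ℝ, C = B ^ m / Real.Gamma (m:ℝ) := ⟨_, rfl⟩
  have hC : 0 < C := by rw [hCdef]; positivity
  have hJ0 : ∫ t in Set.Ioi (0:ℝ), t ^ (m-1) * Real.exp (-(B*t))
      = Real.Gamma (m:ℝ) / B ^ m := moment_eq hB (by omega)
  have hJ1 : ∫ t in Set.Ioi (0:ℝ), t ^ (m-2) * Real.exp (-(B*t))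
      = Real.Gamma ((m:ℝ) - 1) / B ^ (m-1) := by
    have h := moment_eq hB (n := m-1) (by omega)
    rw [show (m-1-1 : ℕ) = m-2 from by omega] at h
    rw [h, Nat.cast_sub (by omega : 1 ≤ m), Nat.cast_one]
  have hJ2 : ∫ t in Set.Ioi (0:ℝ), t ^ (m-3) * Real.exp (-(B*t))
      = Real.Gamma ((m:ℝ) - 2) / B ^ (m-2) := by
    have h := moment_eq hB (n := m-2) (by omega)
    rw [show (m-2-1 : ℕ) = m-3 from by omega] at h
    rw [h, Nat.cast_sub (by omega : 2 ≤ m), Nat.cast_two]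
  have hIg0 := moment_int hB (m-1)
  have hIg1 := moment_int hB (m-2)
  have hIg2 := moment_int hB (m-3)
  have hBm1 : B ^ m = B ^ (m-1) * B := by
    rw [← pow_succ]; congr 1; omega
  have hBm2 : B ^ m = B ^ (m-2) * B ^ 2 := by
    rw [← pow_add]; congr 1; omega
  have hBm1' : B ^ (m-1) = B ^ m / B := by
    rw [hBm1]; field_simp
  have hBm2' : B ^ (m-2) = B ^ m / B ^ 2 := by
    rw [hBm2]; field_simp
  obtain ⟨f, hfdef⟩ : ∃ f : ℝ → ℝ, f = fun t => Real.exp (-(2 * (m : ℝ) * c / t)) *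
      (B ^ m * t ^ (m - 1) * Real.exp (-(B * t)) / Real.Gamma (m : ℝ)) := ⟨_, rfl⟩
  have hfmeas : AEStronglyMeasurable f (volume.restrict (Set.Ioi 0)) := by
    rw [hfdef]
    apply Measurable.aestronglyMeasurable
    fun_prop
  have hfbound : ∀ t ∈ Set.Ioi (0:ℝ),
      f t ≤ C * (t ^ (m-1) * Real.exp (-(B*t))) := by
    intro t ht
    have ht0 : (0:ℝ) < t := ht
    have hx : (0:ℝ) ≤ 2 * (m:ℝ) * c / t := by positivity
    have he1 : Real.exp (-(2 * (m : ℝ) * c / t)) ≤ 1 :=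
      Real.exp_le_one_iff.mpr (by linarith)
    calc f t = Real.exp (-(2 * (m : ℝ) * c / t)) * (C * (t ^ (m-1) * Real.exp (-(B*t)))) := by
          simp only [hfdef, hCdef]; ring
      _ ≤ 1 * (C * (t ^ (m-1) * Real.exp (-(B*t)))) := by
          apply mul_le_mul_of_nonneg_right he1
          rw [hCdef]; positivity
      _ = C * (t ^ (m-1) * Real.exp (-(B*t))) := one_mul _
  have hfnonneg : ∀ t ∈ Set.Ioi (0:ℝ), 0 ≤ f t := by
    intro t ht
    have ht0 : (0:ℝ) < t := ht
    simp only [hfdef]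
    positivity
  have hfint : IntegrableOn f (Set.Ioi 0) := by
    apply Integrable.mono' (hIg0.const_mul C) hfmeas
    filter_upwards [ae_restrict_mem measurableSet_Ioi] with t ht
    rw [Real.norm_eq_abs, abs_of_nonneg (hfnonneg t ht)]
    exact hfbound t ht
  have hpow1 : ∀ t : ℝ, t ^ (m-1) = t ^ (m-2) * t := by
    intro t; rw [← pow_succ]; congr 1; omega
  have hpow2 : ∀ t : ℝ, t ^ (m-1) = t ^ (m-3) * t ^ 2 := by
    intro t; rw [← pow_add]; congr 1; omega
  rw [← hfdef]
  constructor
  · -- lower bound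
    have hintlow : Integrable (fun t : ℝ =>
        (Real.exp (-(2*c*B)) + 2*c*B*Real.exp (-(2*c*B))) * (C * (t ^ (m-1) * Real.exp (-(B*t))))
          - (2*(m:ℝ)*c*Real.exp (-(2*c*B))) * (C * (t ^ (m-2) * Real.exp (-(B*t)))))
        (volume.restrict (Set.Ioi 0)) :=
      ((hIg0.const_mul C).const_mul _).sub ((hIg1.const_mul C).const_mul _)
    have hpt : ∀ t ∈ Set.Ioi (0:ℝ),
        (Real.exp (-(2*c*B)) + 2*c*B*Real.exp (-(2*c*B))) * (C * (t ^ (m-1) * Real.exp (-(B*t))))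
          - (2*(m:ℝ)*c*Real.exp (-(2*c*B))) * (C * (t ^ (m-2) * Real.exp (-(B*t)))) ≤ f t := by
      intro t ht
      have ht0 : (0:ℝ) < t := ht
      set x := 2 * (m:ℝ) * c / t with hxdef
      have key := exp_tangent x (2*c*B)
      have hP : 0 ≤ C * (t ^ (m-1) * Real.exp (-(B*t))) := by rw [hCdef]; positivity
      have hmul := mul_le_mul_of_nonneg_right key hP
      have hxP : x * (t ^ (m-1) * Real.exp (-(B*t)))
          = 2*(m:ℝ)*c * (t ^ (m-2) * Real.exp (-(B*t))) := by
        rw [hpow1 t, hxdef]; field_simp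
      have hfeq : f t = Real.exp (-x) * (C * (t ^ (m-1) * Real.exp (-(B*t)))) := by
        simp only [hfdef, hCdef, hxdef]; ring
      clear_value x
      rw [hfeq]
      refine le_trans (le_of_eq ?_) hmul
      linear_combination (Real.exp (-(2*c*B)) * C) * hxP
    have heq : ∫ t in Set.Ioi (0:ℝ),
        ((Real.exp (-(2*c*B)) + 2*c*B*Real.exp (-(2*c*B))) * (C * (t ^ (m-1) * Real.exp (-(B*t))))
          - (2*(m:ℝ)*c*Real.exp (-(2*c*B))) * (C * (t ^ (m-2) * Real.exp (-(B*t)))))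
          = loF B c m := by
      rw [integral_sub ((hIg0.const_mul C).const_mul _) ((hIg1.const_mul C).const_mul _),
        integral_const_mul, integral_const_mul, integral_const_mul, integral_const_mul,
        hJ0, hJ1]
      rw [loF, hCdef, hg1, hBm1]
      field_simp
    calc loF B c m = _ := heq.symm
      _ ≤ ∫ t in Set.Ioi (0:ℝ), f t :=
        setIntegral_mono_on hintlow hfint measurableSet_Ioi hpt
  · -- upper bound
    have hintup : Integrable (fun t : ℝ =>
        ((Real.exp (-(2*c*B)) + 2*c*B*Real.exp (-(2*c*B)) + 4*c^2*B^2)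
            * (C * (t ^ (m-1) * Real.exp (-(B*t))))
          + (4*(m:ℝ)^2*c^2) * (C * (t ^ (m-3) * Real.exp (-(B*t)))))
          - ((Real.exp (-(2*c*B)) + 4*c*B) * (2*(m:ℝ)*c))
            * (C * (t ^ (m-2) * Real.exp (-(B*t)))))
        (volume.restrict (Set.Ioi 0)) :=
      (((hIg0.const_mul C).const_mul _).add ((hIg2.const_mul C).const_mul _)).sub
        ((hIg1.const_mul C).const_mul _)
    have hpt : ∀ t ∈ Set.Ioi (0:ℝ), f t ≤
        ((Real.exp (-(2*c*B)) + 2*c*B*Real.exp (-(2*c*B)) + 4*c^2*B^2)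
            * (C * (t ^ (m-1) * Real.exp (-(B*t))))
          + (4*(m:ℝ)^2*c^2) * (C * (t ^ (m-3) * Real.exp (-(B*t)))))
          - ((Real.exp (-(2*c*B)) + 4*c*B) * (2*(m:ℝ)*c))
            * (C * (t ^ (m-2) * Real.exp (-(B*t)))) := by
      intro t ht
      have ht0 : (0:ℝ) < t := ht
      set x := 2 * (m:ℝ) * c / t with hxdef
      have hx : (0:ℝ) ≤ x := by rw [hxdef]; positivity
      have key := exp_upper x (2*c*B) hx (by positivity)
      have hP : 0 ≤ C * (t ^ (m-1) * Real.exp (-(B*t))) := by rw [hCdef]; positivity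
      have hmul := mul_le_mul_of_nonneg_right key hP
      have hxP : x * (t ^ (m-1) * Real.exp (-(B*t)))
          = 2*(m:ℝ)*c * (t ^ (m-2) * Real.exp (-(B*t))) := by
        rw [hpow1 t, hxdef]; field_simp
      have hx2P : x^2 * (t ^ (m-1) * Real.exp (-(B*t)))
          = 4*(m:ℝ)^2*c^2 * (t ^ (m-3) * Real.exp (-(B*t))) := by
        rw [hpow2 t, hxdef]; field_simp; ring
      have hfeq : f t = Real.exp (-x) * (C * (t ^ (m-1) * Real.exp (-(B*t)))) := by
        simp only [hfdef, hCdef, hxdef]; ring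
      clear_value x
      rw [hfeq]
      refine le_trans hmul (le_of_eq ?_)
      linear_combination (-(Real.exp (-(2*c*B)) + 4*c*B) * C) * hxP + C * hx2P
    have heq : ∫ t in Set.Ioi (0:ℝ),
        (((Real.exp (-(2*c*B)) + 2*c*B*Real.exp (-(2*c*B)) + 4*c^2*B^2)
            * (C * (t ^ (m-1) * Real.exp (-(B*t))))
          + (4*(m:ℝ)^2*c^2) * (C * (t ^ (m-3) * Real.exp (-(B*t)))))
          - ((Real.exp (-(2*c*B)) + 4*c*B) * (2*(m:ℝ)*c))
            * (C * (t ^ (m-2) * Real.exp (-(B*t)))))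
          = hiF B c m := by
      have hsum : Integrable (fun t : ℝ =>
          (Real.exp (-(2*c*B)) + 2*c*B*Real.exp (-(2*c*B)) + 4*c^2*B^2)
              * (C * (t ^ (m-1) * Real.exp (-(B*t))))
            + (4*(m:ℝ)^2*c^2) * (C * (t ^ (m-3) * Real.exp (-(B*t)))))
          (volume.restrict (Set.Ioi 0)) :=
        ((hIg0.const_mul C).const_mul _).add ((hIg2.const_mul C).const_mul _)
      rw [integral_sub hsum ((hIg1.const_mul C).const_mul _),
        integral_add ((hIg0.const_mul C).const_mul _) ((hIg2.const_mul C).const_mul _),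
        integral_const_mul, integral_const_mul, integral_const_mul, integral_const_mul,
        integral_const_mul, integral_const_mul, hJ0, hJ1, hJ2]
      rw [hiF, loF, hCdef, hg1, hg2, hBm1', hBm2']
      field_simp
      ring
    calc (∫ t in Set.Ioi (0:ℝ), f t) ≤ _ :=
        setIntegral_mono_on hfint hintup measurableSet_Ioi hpt
      _ = hiF B c m := heq

lemma tendsto_loF (B c : ℝ) :
    Tendsto (loF B c) atTop (nhds (Real.exp (-(2 * c * B)))) := by
  have hA1 : Tendsto (fun m : ℕ => (m:ℝ)/((m:ℝ)-1)) atTop (nhds 1) := by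
    have := tendsto_natCast_div_add_atTop (𝕜 := ℝ) (-1)
    simpa [sub_eq_add_neg] using this
  have h : Tendsto (fun m : ℕ =>
      Real.exp (-(2*c*B)) + 2*c*B*Real.exp (-(2*c*B))
        - 2*c*B*Real.exp (-(2*c*B)) * ((m:ℝ)/((m:ℝ)-1))) atTop
      (nhds (Real.exp (-(2*c*B)) + 2*c*B*Real.exp (-(2*c*B))
        - 2*c*B*Real.exp (-(2*c*B)) * 1)) :=
    tendsto_const_nhds.sub (hA1.const_mul _)
  rw [show Real.exp (-(2*c*B)) + 2*c*B*Real.exp (-(2*c*B))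
      - 2*c*B*Real.exp (-(2*c*B)) * 1 = Real.exp (-(2*c*B)) by ring] at h
  exact h

lemma tendsto_hiF (B c : ℝ) :
    Tendsto (hiF B c) atTop (nhds (Real.exp (-(2 * c * B)))) := by
  have hA1 : Tendsto (fun m : ℕ => (m:ℝ)/((m:ℝ)-1)) atTop (nhds 1) := by
    have := tendsto_natCast_div_add_atTop (𝕜 := ℝ) (-1)
    simpa [sub_eq_add_neg] using this
  have hA2 : Tendsto (fun m : ℕ => (m:ℝ)/((m:ℝ)-2)) atTop (nhds 1) := by
    have := tendsto_natCast_div_add_atTop (𝕜 := ℝ) (-2)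
    simpa [sub_eq_add_neg] using this
  have h : Tendsto (fun m : ℕ => loF B c m
      + 4*c^2*B^2*(((m:ℝ)/((m:ℝ)-1))*((m:ℝ)/((m:ℝ)-2)))
      - 8*c^2*B^2*((m:ℝ)/((m:ℝ)-1)) + 4*c^2*B^2) atTop
      (nhds (Real.exp (-(2*c*B)) + 4*c^2*B^2*(1*1) - 8*c^2*B^2*1 + 4*c^2*B^2)) :=
    (((tendsto_loF B c).add ((hA1.mul hA2).const_mul _)).sub
      (hA1.const_mul _)).add tendsto_const_nhds
  rw [show Real.exp (-(2*c*B)) + 4*c^2*B^2*(1*1) - 8*c^2*B^2*1 + 4*c^2*B^2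
      = Real.exp (-(2*c*B)) by ring] at h
  exact h

/-- If `Tₘ ~ Gamma(shape m, rate B)` then the second moment of the CDF estimator,
`E[exp(-m c / Tₘ)²] = E[exp(-2 m c / Tₘ)]`, converges to `exp(-2 c B) = (exp(-c B))²`. -/
theorem cdf_mle_second_moment_limit (B c : ℝ) (hB : 0 < B) (hc : 0 ≤ c) :
    Tendsto (fun m : ℕ =>
        ∫ t in Set.Ioi (0 : ℝ), Real.exp (-(2 * (m : ℝ) * c / t)) *
          (B ^ m * t ^ (m - 1) * Real.exp (-(B * t)) / Real.Gamma (m : ℝ)))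
      atTop (nhds (Real.exp (-(2 * c * B)))) := by
  refine tendsto_of_tendsto_of_tendsto_of_le_of_le' (tendsto_loF B c) (tendsto_hiF B c) ?_ ?_
  · filter_upwards [eventually_ge_atTop 3] with m hm
    exact (sandwich B c hB hc hm).1
  · filter_upwards [eventually_ge_atTop 3] with m hm
    exact (sandwich B c hB hc hm).2
end

section
/- Let B > 0 and c ≥ 0. Then lim_{m→∞} ∫₀^∞ (m/t)² · exp(−2m·c/t) · B^m t^{m−1} e^{−Bt}/Γ(m) dt = B² · exp(−2c·B). That is, if Tₘ ~ Gamma(shape m, rate B), then the second moment of (m/Tₘ)·exp(−m·c/Tₘ) converges to (B·exp(−c·B))², so the variance of the density estimator f̂_{MLE} based on m lower record values tends to 0 as m → ∞. -/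
open MeasureTheory Filter Set

lemma integrableOn_pow_mul_exp {B : ℝ} (hB : 0 < B) (n : ℕ) :
    IntegrableOn (fun t : ℝ => t ^ n * Real.exp (-(B * t))) (Set.Ioi 0) := by
  have h0 : IntegrableOn (fun x : ℝ => x ^ n * Real.exp (-x)) (Set.Ioi (0:ℝ)) := by
    have h := Real.GammaIntegral_convergent (s := (n + 1 : ℝ)) (by positivity)
    refine h.congr_fun (fun x hx => ?_) measurableSet_Ioi
    beta_reduce
    rw [add_sub_cancel_right, Real.rpow_natCast]
    ring
  have h1 : IntegrableOn (fun t : ℝ => (B * t) ^ n * Real.exp (-(B * t))) (Set.Ioi (0:ℝ)) := by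
    have h := (integrableOn_Ioi_comp_mul_left_iff (fun x : ℝ => x ^ n * Real.exp (-x)) 0 hB)
    rw [mul_zero] at h
    exact h.mpr h0
  have h2 : IntegrableOn (fun t : ℝ => ((B : ℝ) ^ n)⁻¹ * ((B * t) ^ n * Real.exp (-(B * t))))
      (Set.Ioi (0:ℝ)) := h1.const_mul ((B : ℝ) ^ n)⁻¹
  refine h2.congr_fun (fun x hx => ?_) measurableSet_Ioi
  beta_reduce
  rw [mul_pow]
  field_simp

lemma integral_pow_mul_exp {B : ℝ} (hB : 0 < B) (n : ℕ) :
    ∫ t in Set.Ioi (0:ℝ), t ^ n * Real.exp (-(B * t)) = (n.factorial : ℝ) / B ^ (n + 1) := by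
  have h := Real.integral_rpow_mul_exp_neg_mul_Ioi (a := (n + 1 : ℝ)) (by positivity) hB
  rw [show ((n : ℝ) + 1) - 1 = (n : ℝ) by ring] at h
  simp_rw [Real.rpow_natCast] at h
  rw [show ((n : ℝ) + 1) = ((n + 1 : ℕ) : ℝ) by push_cast; ring, Real.rpow_natCast] at h
  rw [show ((n + 1 : ℕ) : ℝ) = (n : ℝ) + 1 from by push_cast; ring, Real.Gamma_nat_eq_factorial] at h
  rw [h, one_div, inv_pow]
  field_simp

lemma rho_integrableOn {B : ℝ} (hB : 0 < B) (k : ℕ) :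
    IntegrableOn (fun t : ℝ => B ^ (k+1) * t ^ k * Real.exp (-(B * t)) / (k.factorial : ℝ))
      (Set.Ioi 0) := by
  have h : IntegrableOn
      (fun t : ℝ => (B ^ (k+1) / (k.factorial : ℝ)) * (t ^ k * Real.exp (-(B * t))))
      (Set.Ioi 0) := (integrableOn_pow_mul_exp hB k).const_mul (B ^ (k+1) / (k.factorial : ℝ))
  exact h.congr_fun (fun x _ => by ring) measurableSet_Ioi

lemma rho_integral_one {B : ℝ} (hB : 0 < B) (k : ℕ) :
    ∫ t in Set.Ioi (0:ℝ), B ^ (k+1) * t ^ k * Real.exp (-(B * t)) / (k.factorial : ℝ) = 1 := by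
  have hfac : (k.factorial : ℝ) ≠ 0 := Nat.cast_ne_zero.mpr k.factorial_pos.ne'
  rw [show (fun t : ℝ => B ^ (k+1) * t ^ k * Real.exp (-(B * t)) / (k.factorial : ℝ))
      = (fun t : ℝ => (B ^ (k+1) / (k.factorial : ℝ)) * (t ^ k * Real.exp (-(B * t))))
      from funext fun t => by ring]
  rw [integral_const_mul, integral_pow_mul_exp hB k]
  field_simp

lemma rho_sq_fun_eq {B : ℝ} (k : ℕ) :
    (fun t : ℝ => (B * t - ((k:ℝ)+1)) ^ 2 *
        (B ^ (k+1) * t ^ k * Real.exp (-(B * t)) / (k.factorial : ℝ)))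
      = (fun t : ℝ => (B ^ (k+1) / (k.factorial : ℝ)) *
          (B ^ 2 * (t ^ (k+2) * Real.exp (-(B * t)))
            - (2 * ((k:ℝ)+1) * B) * (t ^ (k+1) * Real.exp (-(B * t)))
            + ((k:ℝ)+1) ^ 2 * (t ^ k * Real.exp (-(B * t))))) :=
  funext fun t => by ring

lemma rho_sq_integrableOn {B : ℝ} (hB : 0 < B) (k : ℕ) :
    IntegrableOn (fun t : ℝ => (B * t - ((k:ℝ)+1)) ^ 2 *
        (B ^ (k+1) * t ^ k * Real.exp (-(B * t)) / (k.factorial : ℝ))) (Set.Ioi 0) := by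
  have h1 : IntegrableOn (fun t : ℝ => B ^ 2 * (t ^ (k+2) * Real.exp (-(B * t)))) (Set.Ioi 0) :=
    (integrableOn_pow_mul_exp hB (k+2)).const_mul (B ^ 2)
  have h2 : IntegrableOn (fun t : ℝ => (2 * ((k:ℝ)+1) * B) * (t ^ (k+1) * Real.exp (-(B * t))))
      (Set.Ioi 0) := (integrableOn_pow_mul_exp hB (k+1)).const_mul (2 * ((k:ℝ)+1) * B)
  have h3 : IntegrableOn (fun t : ℝ => ((k:ℝ)+1) ^ 2 * (t ^ k * Real.exp (-(B * t))))
      (Set.Ioi 0) := (integrableOn_pow_mul_exp hB k).const_mul (((k:ℝ)+1) ^ 2)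
  have h4 : IntegrableOn (fun t : ℝ => B ^ 2 * (t ^ (k+2) * Real.exp (-(B * t)))
      - (2 * ((k:ℝ)+1) * B) * (t ^ (k+1) * Real.exp (-(B * t)))
      + ((k:ℝ)+1) ^ 2 * (t ^ k * Real.exp (-(B * t)))) (Set.Ioi 0) := (h1.sub h2).add h3
  have h5 : IntegrableOn (fun t : ℝ => (B ^ (k+1) / (k.factorial : ℝ)) *
      (B ^ 2 * (t ^ (k+2) * Real.exp (-(B * t)))
      - (2 * ((k:ℝ)+1) * B) * (t ^ (k+1) * Real.exp (-(B * t)))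
      + ((k:ℝ)+1) ^ 2 * (t ^ k * Real.exp (-(B * t))))) (Set.Ioi 0) :=
    h4.const_mul _
  rw [rho_sq_fun_eq]
  exact h5

lemma rho_sq_integral {B : ℝ} (hB : 0 < B) (k : ℕ) :
    ∫ t in Set.Ioi (0:ℝ), (B * t - ((k:ℝ)+1)) ^ 2 *
        (B ^ (k+1) * t ^ k * Real.exp (-(B * t)) / (k.factorial : ℝ)) = (k:ℝ)+1 := by
  have hfac : (k.factorial : ℝ) ≠ 0 := Nat.cast_ne_zero.mpr k.factorial_pos.ne'
  have h1 : IntegrableOn (fun t : ℝ => B ^ 2 * (t ^ (k+2) * Real.exp (-(B * t)))) (Set.Ioi 0) :=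
    (integrableOn_pow_mul_exp hB (k+2)).const_mul (B ^ 2)
  have h2 : IntegrableOn (fun t : ℝ => (2 * ((k:ℝ)+1) * B) * (t ^ (k+1) * Real.exp (-(B * t))))
      (Set.Ioi 0) := (integrableOn_pow_mul_exp hB (k+1)).const_mul (2 * ((k:ℝ)+1) * B)
  have h3 : IntegrableOn (fun t : ℝ => ((k:ℝ)+1) ^ 2 * (t ^ k * Real.exp (-(B * t))))
      (Set.Ioi 0) := (integrableOn_pow_mul_exp hB k).const_mul (((k:ℝ)+1) ^ 2)
  have h12 : IntegrableOn (fun t : ℝ => B ^ 2 * (t ^ (k+2) * Real.exp (-(B * t)))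
      - (2 * ((k:ℝ)+1) * B) * (t ^ (k+1) * Real.exp (-(B * t)))) (Set.Ioi 0) := h1.sub h2
  rw [rho_sq_fun_eq, integral_const_mul, integral_add h12 h3, integral_sub h1 h2,
    integral_const_mul, integral_const_mul, integral_const_mul,
    integral_pow_mul_exp hB (k+2), integral_pow_mul_exp hB (k+1), integral_pow_mul_exp hB k]
  rw [show (k+2).factorial = (k+2) * ((k+1) * k.factorial) from by
      rw [Nat.factorial_succ, Nat.factorial_succ],
    show (k+1).factorial = (k+1) * k.factorial from Nat.factorial_succ k]
  push_cast
  field_simp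
  ring

lemma H_bound {c : ℝ} (hc : 0 < c) (y : ℝ) (hy : 0 ≤ y) :
    y ^ 2 * Real.exp (-(2 * y * c)) ≤ 1 / c ^ 2 := by
  have h1 : y * c * Real.exp (-(y * c)) ≤ 1 := by
    rw [Real.exp_neg, ← div_eq_mul_inv, div_le_one (Real.exp_pos _)]
    linarith [Real.add_one_le_exp (y * c)]
  have h2 : (0:ℝ) ≤ y * c * Real.exp (-(y * c)) := by positivity
  have h3 : (y * c * Real.exp (-(y * c))) ^ 2 ≤ 1 := by nlinarith
  have hexp : Real.exp (-(2 * y * c)) = Real.exp (-(y * c)) * Real.exp (-(y * c)) := by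
    rw [← Real.exp_add]; ring_nf
  rw [le_div_iff₀ (by positivity : (0:ℝ) < c ^ 2), hexp]
  nlinarith [Real.exp_pos (-(y * c))]

set_option maxHeartbeats 1600000 in
/-- If `Tₘ ~ Gamma(shape m, rate B)` then the second moment of the density estimator,
`E[((m / Tₘ) exp(-m c / Tₘ))²]`, converges to `B² exp(-2 c B) = (B exp(-c B))²`. -/
theorem pdf_mle_second_moment_limit (B c : ℝ) (hB : 0 < B) (hc : 0 ≤ c) :
    Tendsto (fun m : ℕ =>
        ∫ t in Set.Ioi (0 : ℝ), ((m : ℝ) / t) ^ 2 * Real.exp (-(2 * (m : ℝ) * c / t)) *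
          (B ^ m * t ^ (m - 1) * Real.exp (-(B * t)) / Real.Gamma (m : ℝ)))
      atTop (nhds (B ^ 2 * Real.exp (-(2 * c * B)))) := by
  rcases hc.eq_or_lt with hc0 | hcpos
  · -- c = 0 case: exact computation
    subst hc0
    simp only [mul_zero, zero_div, neg_zero, Real.exp_zero, mul_one, zero_mul]
    have hF : Tendsto (fun m : ℕ => B ^ 2 * ((1 - 1/(m:ℝ)) * (1 - 2/(m:ℝ)))⁻¹)
        atTop (nhds (B ^ 2)) := by
      have h1 : Tendsto (fun m : ℕ => 1 - 1/(m:ℝ)) atTop (nhds 1) := by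
        simpa using tendsto_const_nhds.sub (tendsto_one_div_atTop_nhds_zero_nat : Tendsto (fun n : ℕ => 1 / (n:ℝ)) atTop (nhds 0))
      have h2 : Tendsto (fun m : ℕ => 1 - 2/(m:ℝ)) atTop (nhds 1) := by
        have : Tendsto (fun m : ℕ => 2/(m:ℝ)) atTop (nhds 0) := by
          simpa [div_eq_mul_inv, one_div] using
            (tendsto_one_div_atTop_nhds_zero_nat : Tendsto (fun n : ℕ => 1 / (n:ℝ)) atTop (nhds 0)).const_mul (2:ℝ)
        simpa using tendsto_const_nhds.sub this
      have h3 : Tendsto (fun m : ℕ => ((1 - 1/(m:ℝ)) * (1 - 2/(m:ℝ)))⁻¹) atTop (nhds 1) := by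
        have := (h1.mul h2).inv₀ (by norm_num)
        simpa using this
      simpa using tendsto_const_nhds.mul h3
    refine hF.congr' ?_
    filter_upwards [eventually_ge_atTop 3] with m hm
    obtain ⟨k, rfl⟩ : ∃ k, m = k + 3 := ⟨m - 3, by omega⟩
    have hfac : ((k+2).factorial : ℝ) ≠ 0 := Nat.cast_ne_zero.mpr (k+2).factorial_pos.ne'
    have hG : Real.Gamma (((k+3:ℕ)):ℝ) = ((k+2).factorial : ℝ) := by
      rw [show (((k+3:ℕ)):ℝ) = ((k+2):ℕ) + 1 by push_cast; ring]
      exact Real.Gamma_nat_eq_factorial (k+2)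
    have heq : ∀ t ∈ Set.Ioi (0:ℝ),
        (((k+3:ℕ):ℝ) / t) ^ 2 * (B ^ (k+3) * t ^ (k+3-1) * Real.exp (-(B * t)) /
          Real.Gamma ((k+3:ℕ):ℝ))
        = (((k+3:ℕ):ℝ) ^ 2 * B ^ (k+3) / ((k+2).factorial : ℝ)) *
            (t ^ k * Real.exp (-(B * t))) := by
      intro t ht
      have ht0 : t ≠ 0 := ne_of_gt ht
      rw [hG, show k+3-1 = k+2 from rfl]
      field_simp
      ring
    rw [setIntegral_congr_fun measurableSet_Ioi heq, integral_const_mul,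
      integral_pow_mul_exp hB k]
    have hk1 : ((k:ℝ)+1) ≠ 0 := by positivity
    have hk2 : ((k:ℝ)+2) ≠ 0 := by positivity
    have hm0 : ((k+3:ℕ):ℝ) = (k:ℝ)+3 := by push_cast; ring
    have hfacsucc : ((k+2).factorial : ℝ) = ((k:ℝ)+2) * (((k:ℝ)+1) * (k.factorial : ℝ)) := by
      rw [show (k+2).factorial = (k+2) * ((k+1) * k.factorial) from by
        rw [Nat.factorial_succ, Nat.factorial_succ]]
      push_cast; ring
    have hkfac : (k.factorial : ℝ) ≠ 0 := Nat.cast_ne_zero.mpr k.factorial_pos.ne'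
    have h3 : ((k:ℝ)+3) ≠ 0 := by positivity
    rw [hm0, hfacsucc, show (1 - 1/((k:ℝ)+3)) * (1 - 2/((k:ℝ)+3))
        = (((k:ℝ)+2)*((k:ℝ)+1))/(((k:ℝ)+3)^2) from by field_simp; ring, inv_div]
    field_simp
    ring
  · -- c > 0 case: concentration argument
    rw [Metric.tendsto_atTop]
    intro ε hε
    obtain ⟨L, hLdef⟩ : ∃ x : ℝ, x = B ^ 2 * Real.exp (-(2 * c * B)) := ⟨_, rfl⟩
    rw [← hLdef]
    have hL0 : 0 < L := by rw [hLdef]; positivity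
    obtain ⟨K, hKdef⟩ : ∃ x : ℝ, x = 1/c^2 + L := ⟨_, rfl⟩
    have hK0 : 0 < K := by rw [hKdef, hLdef]; positivity
    obtain ⟨ψ, hψdef⟩ : ∃ f : ℝ → ℝ,
        f = fun s => (B/s) ^ 2 * Real.exp (-(2 * c * B / s)) := ⟨_, rfl⟩
    have hψ1 : ψ 1 = L := by rw [hψdef, hLdef]; norm_num
    have hψcont : ContinuousAt ψ 1 := by
      rw [hψdef]
      have h01 : (1:ℝ) ≠ 0 := one_ne_zero
      exact ((continuousAt_const.div continuousAt_id h01).pow 2).mul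
        (Real.continuous_exp.continuousAt.comp
          ((continuousAt_const.div continuousAt_id h01).neg))
    obtain ⟨δ₀, hδ₀, hball⟩ := Metric.continuousAt_iff.mp hψcont (ε/2) (half_pos hε)
    obtain ⟨δ, hδdef⟩ : ∃ x : ℝ, x = min (δ₀/2) 1 := ⟨_, rfl⟩
    have hδpos : 0 < δ := by rw [hδdef]; exact lt_min (half_pos hδ₀) one_pos
    have hδlt : δ < δ₀ := by
      rw [hδdef]; exact lt_of_le_of_lt (min_le_left _ _) (half_lt_self hδ₀)
    obtain ⟨N₀, hN₀⟩ := exists_nat_gt (2 * K / (δ^2 * ε))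
    refine ⟨N₀ + 1, fun m hm => ?_⟩
    obtain ⟨k, rfl⟩ : ∃ k, m = k + 1 := ⟨m - 1, by omega⟩
    obtain ⟨mR, hmRdef⟩ : ∃ x : ℝ, x = (k:ℝ) + 1 := ⟨_, rfl⟩
    have hmR0 : (0:ℝ) < mR := by rw [hmRdef]; positivity
    have hmge : 2 * K / (δ^2 * ε) < mR := by
      refine lt_of_lt_of_le hN₀ ?_
      rw [hmRdef]
      have h : (N₀:ℝ) ≤ (k:ℝ) := by exact_mod_cast (by omega : N₀ ≤ k)
      linarith
    obtain ⟨ρ, hρdef⟩ : ∃ f : ℝ → ℝ,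
        f = fun t => B ^ (k+1) * t ^ k * Real.exp (-(B*t)) / (k.factorial : ℝ) := ⟨_, rfl⟩
    obtain ⟨H, hHdef⟩ : ∃ f : ℝ → ℝ,
        f = fun t => (mR/t) ^ 2 * Real.exp (-(2 * mR * c / t)) := ⟨_, rfl⟩
    have hGam : Real.Gamma (((k+1:ℕ)):ℝ) = (k.factorial : ℝ) := by
      rw [show (((k+1:ℕ)):ℝ) = ((k:ℝ)) + 1 by push_cast; ring]
      exact Real.Gamma_nat_eq_factorial k
    have hfn : (∫ t in Set.Ioi (0:ℝ), (((k+1:ℕ):ℝ) / t) ^ 2 *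
          Real.exp (-(2 * ((k+1:ℕ):ℝ) * c / t)) *
          (B ^ (k+1) * t ^ (k+1-1) * Real.exp (-(B * t)) / Real.Gamma ((k+1:ℕ):ℝ)))
        = ∫ t in Set.Ioi (0:ℝ), H t * ρ t := by
      refine integral_congr_ae (Filter.EventuallyEq.of_eq (funext fun t => ?_))
      rw [hGam]
      simp only [hHdef, hρdef, hmRdef, show k+1-1 = k from rfl]
      push_cast
      ring
    have hρ_int : IntegrableOn ρ (Set.Ioi 0) := by
      rw [hρdef]; exact rho_integrableOn hB k
    have hρ_one : ∫ t in Set.Ioi (0:ℝ), ρ t = 1 := by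
      simp only [hρdef]; exact rho_integral_one hB k
    have hρ_nonneg : ∀ t ∈ Set.Ioi (0:ℝ), 0 ≤ ρ t := fun t ht => by
      rw [hρdef]
      exact div_nonneg (mul_nonneg (mul_nonneg (by positivity) (pow_nonneg (le_of_lt ht) k))
        (Real.exp_pos _).le) (Nat.cast_nonneg _)
    have hH_nonneg : ∀ t : ℝ, 0 ≤ H t := fun t => by
      rw [hHdef]; positivity
    have hH_le : ∀ t ∈ Set.Ioi (0:ℝ), H t ≤ 1/c^2 := by
      intro t ht
      have hy : 0 ≤ mR / t := div_nonneg hmR0.le (le_of_lt ht)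
      have h := H_bound hcpos (mR / t) hy
      rw [hHdef]
      show (mR/t) ^ 2 * Real.exp (-(2 * mR * c / t)) ≤ 1/c^2
      rw [show 2 * mR * c / t = 2 * (mR / t) * c from by ring]
      exact h
    have hmeasρ : Measurable ρ := by rw [hρdef]; fun_prop
    have hmeasH : Measurable H := by rw [hHdef]; fun_prop
    have hHρ_int : IntegrableOn (fun t => H t * ρ t) (Set.Ioi 0) := by
      refine Integrable.mono' (hρ_int.const_mul (1/c^2))
        ((hmeasH.mul hmeasρ).aestronglyMeasurable) ?_
      rw [ae_restrict_iff' measurableSet_Ioi]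
      refine ae_of_all _ fun t ht => ?_
      rw [Real.norm_eq_abs, abs_of_nonneg (mul_nonneg (hH_nonneg t) (hρ_nonneg t ht))]
      exact mul_le_mul_of_nonneg_right (hH_le t ht) (hρ_nonneg t ht)
    have hq_int : IntegrableOn (fun t : ℝ => (B * t - mR) ^ 2 * ρ t) (Set.Ioi 0) := by
      simp only [hρdef, hmRdef]; exact rho_sq_integrableOn hB k
    have hq_val : ∫ t in Set.Ioi (0:ℝ), (B * t - mR) ^ 2 * ρ t = mR := by
      simp only [hρdef, hmRdef]; exact rho_sq_integral hB k
    have hsplit : (∫ t in Set.Ioi (0:ℝ), H t * ρ t) - L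
        = ∫ t in Set.Ioi (0:ℝ), (H t - L) * ρ t := by
      rw [show (fun t => (H t - L) * ρ t) = fun t => H t * ρ t - L * ρ t from
        funext fun t => by ring]
      rw [integral_sub hHρ_int (hρ_int.const_mul L), integral_const_mul, hρ_one, mul_one]
    -- pointwise bound
    have hpt : ∀ t ∈ Set.Ioi (0:ℝ), |(H t - L) * ρ t|
        ≤ ε/2 * ρ t + (K/(δ*mR)^2) * ((B * t - mR) ^ 2 * ρ t) := by
      intro t ht
      have ht0 : t ≠ 0 := ne_of_gt ht
      rw [abs_mul, abs_of_nonneg (hρ_nonneg t ht)]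
      by_cases hcase : |B * t - mR| < δ * mR
      · have hs : dist (B * t / mR) 1 < δ₀ := by
          rw [Real.dist_eq, show B * t / mR - 1 = (B * t - mR) / mR from by field_simp,
            abs_div, abs_of_pos hmR0]
          calc |B * t - mR| / mR < δ := by rw [div_lt_iff₀ hmR0]; exact hcase
            _ < δ₀ := hδlt
        have hψH : ψ (B * t / mR) = H t := by
          rw [hψdef, hHdef]
          show (B / (B * t / mR)) ^ 2 * Real.exp (-(2 * c * B / (B * t / mR)))
            = (mR/t) ^ 2 * Real.exp (-(2 * mR * c / t))
          have hB0 : B ≠ 0 := ne_of_gt hB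
          have hmRne : mR ≠ 0 := ne_of_gt hmR0
          have e1 : B / (B * t / mR) = mR / t := by
            field_simp
          have e2 : -(2 * c * B / (B * t / mR)) = -(2 * mR * c / t) := by
            rw [neg_inj, div_div_eq_mul_div, div_eq_div_iff (mul_ne_zero hB0 ht0) ht0]
            ring
          rw [e1, e2]
        have hdist := hball hs
        rw [hψ1, hψH, Real.dist_eq] at hdist
        have h1 : |H t - L| * ρ t ≤ ε/2 * ρ t :=
          mul_le_mul_of_nonneg_right hdist.le (hρ_nonneg t ht)
        have hnn : 0 ≤ (K/(δ*mR)^2) * ((B * t - mR) ^ 2 * ρ t) :=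
          mul_nonneg (by positivity) (mul_nonneg (sq_nonneg _) (hρ_nonneg t ht))
        linarith
      · push_neg at hcase
        have hc2 : (0:ℝ) ≤ 1/c^2 := by positivity
        have hHL : |H t - L| ≤ K := by
          rw [abs_le]
          constructor
          · have := hH_nonneg t; rw [hKdef]; linarith
          · have := hH_le t ht; rw [hKdef]; linarith
        have hsq : (δ*mR)^2 ≤ (B * t - mR)^2 := by
          rw [← sq_abs (B * t - mR)]
          exact pow_le_pow_left₀ (by positivity) hcase 2
        have h2' : K ≤ K/(δ*mR)^2 * (B * t - mR)^2 := by
          rw [div_mul_eq_mul_div, le_div_iff₀ (by positivity)]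
          exact mul_le_mul_of_nonneg_left hsq hK0.le
        have h3' : |H t - L| * ρ t ≤ (K/(δ*mR)^2 * (B * t - mR)^2) * ρ t :=
          mul_le_mul_of_nonneg_right (hHL.trans h2') (hρ_nonneg t ht)
        have hεnn : 0 ≤ ε/2 * ρ t := mul_nonneg (by positivity) (hρ_nonneg t ht)
        rw [mul_assoc] at h3'
        linarith
    -- assembly
    have hg_int : IntegrableOn
        (fun t => ε/2 * ρ t + (K/(δ*mR)^2) * ((B * t - mR) ^ 2 * ρ t)) (Set.Ioi 0) :=
      (hρ_int.const_mul (ε/2)).add (hq_int.const_mul (K/(δ*mR)^2))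
    have hmono : |∫ t in Set.Ioi (0:ℝ), (H t - L) * ρ t|
        ≤ ∫ t in Set.Ioi (0:ℝ),
            (ε/2 * ρ t + (K/(δ*mR)^2) * ((B * t - mR) ^ 2 * ρ t)) := by
      calc |∫ t in Set.Ioi (0:ℝ), (H t - L) * ρ t|
          ≤ ∫ t in Set.Ioi (0:ℝ), |(H t - L) * ρ t| := by
            simpa only [Real.norm_eq_abs] using
              norm_integral_le_integral_norm (μ := volume.restrict (Set.Ioi 0))
                (fun t => (H t - L) * ρ t)
        _ ≤ _ := integral_mono_of_nonneg (ae_of_all _ fun t => abs_nonneg _) hg_int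
              ((ae_restrict_iff' measurableSet_Ioi).2 (ae_of_all _ hpt))
    have hval : ∫ t in Set.Ioi (0:ℝ),
        (ε/2 * ρ t + (K/(δ*mR)^2) * ((B * t - mR) ^ 2 * ρ t))
        = ε/2 + K/(δ*mR)^2 * mR := by
      rw [integral_add (hρ_int.const_mul (ε/2)) (hq_int.const_mul (K/(δ*mR)^2)),
        integral_const_mul, integral_const_mul, hρ_one, hq_val, mul_one]
    have hfinal : K/(δ*mR)^2 * mR < ε/2 := by
      rw [div_lt_iff₀ (by positivity)] at hmge
      have hrw : K/(δ*mR)^2 * mR = K/(δ^2*mR) := by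
        rw [mul_pow, div_mul_eq_mul_div, div_eq_div_iff (by positivity) (by positivity)]
        ring
      rw [hrw, div_lt_iff₀ (mul_pos (pow_pos hδpos 2) hmR0)]
      nlinarith
    rw [Real.dist_eq, hfn, hsplit]
    calc |∫ t in Set.Ioi (0:ℝ), (H t - L) * ρ t|
        ≤ ε/2 + K/(δ*mR)^2 * mR := hmono.trans_eq hval
      _ < ε := by linarith
end

section
/- Let (Ω, 𝓕, P) be a probability space, B > 0, and (Tₘ)_{m≥1} a sequence of random variables on Ω such that for each m, Tₘ has the Gamma distribution with shape m and rate B. Then the sequence m/Tₘ converges to the constant B in probability: for every ε > 0, P(|m/Tₘ − B| > ε) → 0 as m → ∞. -/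
open MeasureTheory ProbabilityTheory Filter Real Set
open scoped ENNReal NNReal

lemma integ_aux {a b : ℝ} (ha : 0 < a) (hb : 0 < b) :
    IntegrableOn (fun t : ℝ => t ^ (a - 1) * Real.exp (-(b * t))) (Ioi 0) := by
  have h := integrableOn_rpow_mul_exp_neg_mul_rpow (s := a - 1) (p := 1) (by linarith) zero_lt_one hb
  refine h.congr_fun (fun x _ => ?_) measurableSet_Ioi
  simp only [Real.rpow_one, neg_mul]

lemma gamma_key {a b : ℝ} (ha : 0 < a) (t : ℝ) (ht : t ∈ Ioi (0:ℝ)) :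
    gammaPDFReal a b t * (t - a / b) ^ 2 =
      (b ^ a / Real.Gamma a) * (t ^ (a + 2 - 1) * Real.exp (-(b * t))) +
      ((-(2 * (a / b)) * (b ^ a / Real.Gamma a)) * (t ^ (a + 1 - 1) * Real.exp (-(b * t))) +
      (((a / b) ^ 2 * (b ^ a / Real.Gamma a)) * (t ^ (a - 1) * Real.exp (-(b * t))))) := by
  have ht' : (0:ℝ) < t := ht
  rw [gammaPDFReal, if_pos ht'.le]
  have r2 : t ^ (a + 2 - 1) = t ^ (a - 1) * t ^ 2 := by
    rw [show a + 2 - 1 = (a - 1) + 2 by ring, Real.rpow_add ht', Real.rpow_two]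
  have r1 : t ^ (a + 1 - 1) = t ^ (a - 1) * t := by
    rw [show a + 1 - 1 = (a - 1) + 1 by ring, Real.rpow_add ht', Real.rpow_one]
  rw [r2, r1]
  ring

lemma gamma_var_integrable {a b : ℝ} (ha : 0 < a) (hb : 0 < b) :
    IntegrableOn (fun t : ℝ => gammaPDFReal a b t * (t - a / b) ^ 2) (Ioi 0) := by
  have i2 := (integ_aux (by linarith : (0:ℝ) < a + 2) hb).const_mul (b ^ a / Real.Gamma a)
  have i1 := (integ_aux (by linarith : (0:ℝ) < a + 1) hb).const_mul
    (-(2 * (a / b)) * (b ^ a / Real.Gamma a))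
  have i0 := (integ_aux ha hb).const_mul ((a / b) ^ 2 * (b ^ a / Real.Gamma a))
  exact MeasureTheory.IntegrableOn.congr_fun (i2.add (i1.add i0))
    (fun t ht => (gamma_key ha t ht).symm) measurableSet_Ioi

lemma gamma_var {a b : ℝ} (ha : 0 < a) (hb : 0 < b) :
    ∫ t in Ioi (0:ℝ), gammaPDFReal a b t * (t - a / b) ^ 2 = a / b ^ 2 := by
  have h2 : (0:ℝ) < a + 2 := by linarith
  have h1 : (0:ℝ) < a + 1 := by linarith
  have e2 := integral_rpow_mul_exp_neg_mul_Ioi h2 hb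
  have e1 := integral_rpow_mul_exp_neg_mul_Ioi h1 hb
  have e0 := integral_rpow_mul_exp_neg_mul_Ioi ha hb
  have i2 := integ_aux h2 hb
  have i1 := integ_aux h1 hb
  have i0 := integ_aux ha hb
  have hG := Real.Gamma_pos_of_pos ha
  rw [setIntegral_congr_fun measurableSet_Ioi (gamma_key ha)]
  rw [integral_add, integral_add, integral_const_mul, integral_const_mul, integral_const_mul,
    e2, e1, e0]
  · rw [show a + 2 = (a + 1) + 1 by ring, Real.Gamma_add_one h1.ne',
      Real.Gamma_add_one ha.ne']
    have hba : (1 / b) ^ (a + 1 + 1) = (b ^ a)⁻¹ * (1/b) * (1/b) := by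
      rw [Real.rpow_add (by positivity), Real.rpow_add (by positivity), Real.rpow_one,
        one_div, Real.inv_rpow hb.le]
    have hba1 : (1 / b) ^ (a + 1) = (b ^ a)⁻¹ * (1/b) := by
      rw [Real.rpow_add (by positivity), Real.rpow_one, one_div, Real.inv_rpow hb.le]
    have hba0 : (1 / b) ^ a = (b ^ a)⁻¹ := by
      rw [one_div, Real.inv_rpow hb.le]
    rw [hba, hba1, hba0]
    have hbna : (0:ℝ) < b ^ a := Real.rpow_pos_of_pos hb a
    field_simp
    ring
  · exact i1.const_mul _
  · exact i0.const_mul _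
  · exact i2.const_mul _
  · exact (i1.const_mul _).add (i0.const_mul _)

lemma gammaMeasure_Iic_zero {a b : ℝ} : gammaMeasure a b (Iic 0) = 0 := by
  rw [gammaMeasure, withDensity_apply _ measurableSet_Iic,
    lintegral_Iic_eq_lintegral_Iio_add_Icc _ (le_refl (0:ℝ)),
    ProbabilityTheory.lintegral_gammaPDF_of_nonpos le_rfl, Icc_self, lintegral_singleton]
  simp

lemma gamma_var_lintegral {a b : ℝ} (ha : 0 < a) (hb : 0 < b) :
    ∫⁻ t, ENNReal.ofReal ((t - a / b) ^ 2) ∂(gammaMeasure a b) = ENNReal.ofReal (a / b ^ 2) := by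
  have hg : Measurable fun t : ℝ => ENNReal.ofReal ((t - a / b) ^ 2) :=
    (((measurable_id.sub measurable_const).pow_const 2)).ennreal_ofReal
  have hpdf : Measurable (gammaPDF a b) := (measurable_gammaPDFReal a b).ennreal_ofReal
  rw [gammaMeasure, lintegral_withDensity_eq_lintegral_mul _ hpdf hg,
    ← lintegral_add_compl _ measurableSet_Ici (μ := volume), compl_Ici]
  have left : ∫⁻ t in Iio (0:ℝ), (gammaPDF a b * fun t => ENNReal.ofReal ((t - a / b) ^ 2)) t = 0 := by
    rw [setLIntegral_congr_fun_ae (g := fun _ => 0) measurableSet_Iio, lintegral_zero]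
    filter_upwards with t (ht : t < 0)
    simp [ProbabilityTheory.gammaPDF_of_neg ht]
  have right : ∫⁻ t in Ici (0:ℝ), (gammaPDF a b * fun t => ENNReal.ofReal ((t - a / b) ^ 2)) t
      = ENNReal.ofReal (a / b ^ 2) := by
    have step : ∀ t ∈ Ici (0:ℝ), (gammaPDF a b * fun t => ENNReal.ofReal ((t - a / b) ^ 2)) t
        = ENNReal.ofReal (gammaPDFReal a b t * (t - a / b) ^ 2) := by
      intro t _
      simp only [Pi.mul_apply, gammaPDF]
      rw [← ENNReal.ofReal_mul (gammaPDFReal_nonneg ha hb t)]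
    rw [setLIntegral_congr_fun_ae measurableSet_Ici (ae_of_all _ step),
      ← ofReal_integral_eq_lintegral_ofReal, integral_Ici_eq_integral_Ioi, gamma_var ha hb]
    · exact Iff.mpr integrableOn_Ici_iff_integrableOn_Ioi (gamma_var_integrable ha hb)
    · exact ae_of_all _ fun t => mul_nonneg (gammaPDFReal_nonneg ha hb t) (sq_nonneg _)
  rw [left, right, add_zero]
/-- If `Tₘ ~ Gamma(shape m, rate B)` for each `m ≥ 1`, then `m / Tₘ → B` in probability. -/
theorem mle_rate_tendsto_in_probability {Ω : Type*} [MeasurableSpace Ω]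
    (P : Measure Ω) [IsProbabilityMeasure P] (B : ℝ) (hB : 0 < B)
    (T : ℕ → Ω → ℝ)
    (hT : ∀ m : ℕ, 1 ≤ m → Measure.map (T m) P = gammaMeasure (m : ℝ) B) :
    ∀ ε : ℝ, 0 < ε →
      Tendsto (fun m : ℕ => P {ω | ε < |(m : ℝ) / T m ω - B|}) atTop (nhds 0) := by
  intro ε hε
  set c : ℝ := ε / (B * (B + ε)) with hc
  have hc0 : 0 < c := by positivity
  -- key real inequality
  have hreal : ∀ m : ℕ, 1 ≤ m → ∀ t : ℝ, 0 < t → ε < |(m : ℝ) / t - B| →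
      (m : ℝ) * c ≤ |t - (m : ℝ) / B| := by
    intro m hm t ht hlt
    have hm' : (0 : ℝ) < m := by exact_mod_cast hm
    have hmB : ((m : ℝ) / B) * B = m := div_mul_cancel₀ _ hB.ne'
    rcases lt_abs.mp hlt with h | h
    · -- m/t > B + ε
      have h1 : (B + ε) * t < m := by
        rw [← lt_div_iff₀ ht]; linarith
      have h2 : (m : ℝ) * c ≤ (m : ℝ) / B - t := by
        rw [hc, ← mul_div_assoc, div_le_iff₀ (by positivity)]
        nlinarith [mul_lt_mul_of_pos_left h1 hB]
      calc (m : ℝ) * c ≤ (m : ℝ) / B - t := h2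
        _ ≤ |(m : ℝ) / B - t| := le_abs_self _
        _ = |t - (m : ℝ) / B| := abs_sub_comm _ _
    · -- m/t < B - ε
      have h0 : (m : ℝ) / t < B - ε := by linarith
      have hεB : ε < B := by
        have := div_pos hm' ht
        linarith
      have h1 : (m : ℝ) < (B - ε) * t := by
        rw [← div_lt_iff₀ ht]; linarith
      have h2 : (m : ℝ) * c ≤ t - (m : ℝ) / B := by
        rw [hc, ← mul_div_assoc, div_le_iff₀ (by positivity)]
        nlinarith [mul_lt_mul_of_pos_left h1 hB, mul_lt_mul_of_pos_left h1 hε,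
          mul_pos (mul_pos hε hε) ht]
      calc (m : ℝ) * c ≤ t - (m : ℝ) / B := h2
        _ ≤ |t - (m : ℝ) / B| := le_abs_self _
  -- the bound for each m ≥ 1
  have hbound : ∀ m : ℕ, 1 ≤ m →
      P {ω | ε < |(m : ℝ) / T m ω - B|} ≤
        ENNReal.ofReal (((m : ℝ) / B ^ 2) / (((m : ℝ) * c) ^ 2)) := by
    intro m hm
    have hm' : (0 : ℝ) < m := by exact_mod_cast hm
    have hmap := hT m hm
    have hprob : IsProbabilityMeasure (gammaMeasure (m : ℝ) B) :=
      isProbabilityMeasure_gammaMeasure hm' hB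
    have hae : AEMeasurable (T m) P := by
      refine aemeasurable_of_map_neZero ⟨?_⟩
      rw [hmap]
      exact IsProbabilityMeasure.ne_zero _
    have hsetmeas : MeasurableSet {t : ℝ | ε < |(m : ℝ) / t - B|} :=
      measurableSet_lt measurable_const
        (((measurable_const.div measurable_id).sub measurable_const).abs)
    have hmapeq : P {ω | ε < |(m : ℝ) / T m ω - B|}
        = gammaMeasure (m : ℝ) B {t : ℝ | ε < |(m : ℝ) / t - B|} := by
      rw [← hmap, Measure.map_apply_of_aemeasurable hae hsetmeas]
      rfl
    rw [hmapeq]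
    set f : ℝ → ℝ≥0∞ := fun t => ENNReal.ofReal ((t - (m : ℝ) / B) ^ 2) with hf
    have hfm : AEMeasurable f (gammaMeasure (m : ℝ) B) :=
      (((measurable_id.sub measurable_const).pow_const 2)).ennreal_ofReal.aemeasurable
    set δ : ℝ≥0∞ := ENNReal.ofReal (((m : ℝ) * c) ^ 2) with hδ
    have hδ0 : δ ≠ 0 := by
      rw [hδ]
      simp only [ne_eq, ENNReal.ofReal_eq_zero, not_le]
      positivity
    have hsub : {t : ℝ | ε < |(m : ℝ) / t - B|} ⊆ {t : ℝ | δ ≤ f t} ∪ Iic 0 := by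
      intro t ht
      rcases le_or_gt t 0 with h | h
      · exact Or.inr h
      · refine Or.inl ?_
        have key := hreal m hm t h ht
        have hsq : ((m : ℝ) * c) ^ 2 ≤ (t - (m : ℝ) / B) ^ 2 := by
          rw [← sq_abs (t - (m : ℝ) / B)]
          exact pow_le_pow_left₀ (by positivity) key 2
        exact ENNReal.ofReal_le_ofReal hsq
    have cheb : gammaMeasure (m : ℝ) B {t : ℝ | δ ≤ f t} ≤
        ENNReal.ofReal ((m : ℝ) / B ^ 2) / δ := by
      rw [ENNReal.le_div_iff_mul_le (Or.inl hδ0) (Or.inl ENNReal.ofReal_ne_top), mul_comm]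
      rw [← gamma_var_lintegral hm' hB]
      exact mul_meas_ge_le_lintegral₀ hfm δ
    calc gammaMeasure (m : ℝ) B {t : ℝ | ε < |(m : ℝ) / t - B|}
        ≤ gammaMeasure (m : ℝ) B ({t : ℝ | δ ≤ f t} ∪ Iic 0) := measure_mono hsub
      _ ≤ gammaMeasure (m : ℝ) B {t : ℝ | δ ≤ f t} + gammaMeasure (m : ℝ) B (Iic 0) :=
          measure_union_le _ _
      _ = gammaMeasure (m : ℝ) B {t : ℝ | δ ≤ f t} := by rw [gammaMeasure_Iic_zero, add_zero]
      _ ≤ ENNReal.ofReal ((m : ℝ) / B ^ 2) / δ := cheb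
      _ = ENNReal.ofReal (((m : ℝ) / B ^ 2) / (((m : ℝ) * c) ^ 2)) := by
          rw [hδ, ENNReal.ofReal_div_of_pos (y := ((m : ℝ) * c) ^ 2) (by positivity)]
  -- the bound tends to 0
  have htendsto : Tendsto (fun m : ℕ =>
      ENNReal.ofReal (((m : ℝ) / B ^ 2) / (((m : ℝ) * c) ^ 2))) atTop (nhds 0) := by
    have hr : Tendsto (fun m : ℕ => ((m : ℝ) / B ^ 2) / (((m : ℝ) * c) ^ 2)) atTop (nhds 0) := by
      have base : Tendsto (fun m : ℕ => (1 / (B ^ 2 * c ^ 2)) * (1 / (m : ℝ))) atTop (nhds 0) := by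
        have h0 := tendsto_one_div_atTop_nhds_zero_nat.const_mul (1 / (B ^ 2 * c ^ 2))
        rw [mul_zero] at h0
        exact h0
      refine base.congr' ?_
      filter_upwards [eventually_ge_atTop 1] with m hm
      have hm' : (0 : ℝ) < m := by exact_mod_cast hm
      field_simp
    have := (ENNReal.continuous_ofReal.tendsto 0).comp hr
    simpa [Function.comp_def] using this
  refine tendsto_of_tendsto_of_tendsto_of_le_of_le' tendsto_const_nhds htendsto ?_ ?_
  · exact Eventually.of_forall fun m => zero_le
  · filter_upwards [eventually_ge_atTop 1] with m hm using hbound m hm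
end

section
/- (Theorem 5, part ii) Let (Ω, 𝓕, P) be a probability space, B > 0, c ≥ 0, and (Tₘ)_{m≥1} a sequence of random variables on Ω with Tₘ ~ Gamma(shape m, rate B) for each m. Then exp(−m·c/Tₘ) converges in probability to exp(−c·B) as m → ∞. That is, the maximum likelihood estimator F̂ of the CDF F(x;θ) = exp(−B(θ)A(x)) based on m lower record values is a consistent estimator of F(x;θ). -/
open MeasureTheory ProbabilityTheory Filter Real Set

section Aux

variable {s B : ℝ}

lemma aux_pdf_eq (hs : 0 < s) (k : ℕ) {x : ℝ} (hx : 0 < x) :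
    x ^ k * gammaPDFReal s B x
      = (B ^ s / Real.Gamma s) * (x ^ (s + k - 1) * Real.exp (-(B * x))) := by
  rw [gammaPDFReal, if_pos hx.le, ← Real.rpow_natCast x k]
  rw [show s + (k : ℝ) - 1 = (s - 1) + (k : ℝ) by ring, Real.rpow_add hx]
  ring

lemma aux_integrableOn (hs : 0 < s) (hB : 0 < B) :
    IntegrableOn (fun x : ℝ => x ^ (s - 1) * Real.exp (-(B * x))) (Set.Ioi 0) := by
  have h : IntegrableOn (fun x : ℝ => x ^ (s - 1) * Real.exp (-B * x ^ (1:ℝ))) (Set.Ioi 0) :=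
    integrableOn_rpow_mul_exp_neg_mul_rpow (p := 1) (s := s - 1) (b := B)
      (by linarith) zero_lt_one hB
  refine h.congr_fun (fun x hx => ?_) measurableSet_Ioi
  dsimp only
  rw [Real.rpow_one, neg_mul]

lemma gamma_moment_integrable (hs : 0 < s) (hB : 0 < B) (k : ℕ) :
    IntegrableOn (fun x : ℝ => x ^ k * gammaPDFReal s B x) (Set.Ioi 0) := by
  have h : IntegrableOn
      (fun x : ℝ => (B ^ s / Real.Gamma s) * (x ^ (s + k - 1) * Real.exp (-(B * x))))
      (Set.Ioi 0) :=
    (aux_integrableOn (s := s + k) (by positivity) hB).const_mul (B ^ s / Real.Gamma s)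
  exact h.congr_fun (fun x hx => (aux_pdf_eq hs k hx).symm) measurableSet_Ioi

lemma gamma_moment (hs : 0 < s) (hB : 0 < B) (k : ℕ) :
    ∫ x in Set.Ioi (0:ℝ), x ^ k * gammaPDFReal s B x
      = Real.Gamma (s + k) / (Real.Gamma s * B ^ k) := by
  rw [setIntegral_congr_fun measurableSet_Ioi (fun x hx => aux_pdf_eq hs k hx),
    integral_const_mul, integral_rpow_mul_exp_neg_mul_Ioi (by positivity) hB]
  have hΓ : Real.Gamma s ≠ 0 := (Real.Gamma_pos_of_pos hs).ne'
  have key : (1 / B) ^ (s + (k : ℝ)) = (B ^ s)⁻¹ * ((B : ℝ) ^ k)⁻¹ := by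
    rw [one_div, ← Real.rpow_natCast B k, Real.inv_rpow hB.le, ← mul_inv,
      ← Real.rpow_add hB]
  rw [key]
  have h1 : (0:ℝ) < B ^ s := Real.rpow_pos_of_pos hB _
  field_simp

lemma gamma_var_s13 (hs : 0 < s) (hB : 0 < B) :
    ∫ x in Set.Ioi (0:ℝ), (x - s / B) ^ 2 * gammaPDFReal s B x = s / B ^ 2 := by
  set t := s / B with ht
  have I0 := gamma_moment_integrable (s := s) (B := B) hs hB 0
  have I1 := gamma_moment_integrable (s := s) (B := B) hs hB 1
  have I2 := gamma_moment_integrable (s := s) (B := B) hs hB 2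
  have hfun : ∀ x : ℝ, (x - t) ^ 2 * gammaPDFReal s B x
      = (x ^ 2 * gammaPDFReal s B x - (2 * t) * (x ^ 1 * gammaPDFReal s B x))
        + t ^ 2 * (x ^ 0 * gammaPDFReal s B x) := by
    intro x; ring
  have J1 : IntegrableOn (fun x : ℝ => (2 * t) * (x ^ 1 * gammaPDFReal s B x))
      (Set.Ioi 0) := I1.const_mul _
  have J0 : IntegrableOn (fun x : ℝ => t ^ 2 * (x ^ 0 * gammaPDFReal s B x))
      (Set.Ioi 0) := I0.const_mul _
  have J2 : IntegrableOn
      (fun x : ℝ => x ^ 2 * gammaPDFReal s B x - (2 * t) * (x ^ 1 * gammaPDFReal s B x))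
      (Set.Ioi 0) := I2.sub J1
  rw [setIntegral_congr_fun measurableSet_Ioi (fun x _ => hfun x),
    integral_add J2 J0, integral_sub I2 J1, integral_const_mul, integral_const_mul,
    gamma_moment hs hB 0, gamma_moment hs hB 1, gamma_moment hs hB 2]
  have hΓ : Real.Gamma s ≠ 0 := (Real.Gamma_pos_of_pos hs).ne'
  have h1 : Real.Gamma (s + 1) = s * Real.Gamma s := Real.Gamma_add_one hs.ne'
  have h2 : Real.Gamma (s + 2) = (s + 1) * (s * Real.Gamma s) := by
    rw [show s + 2 = (s + 1) + 1 by ring, Real.Gamma_add_one (by positivity), h1]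
  push_cast
  rw [h1, h2, ht]
  field_simp
  ring

lemma gamma_var_integrable_s13 (hs : 0 < s) (hB : 0 < B) :
    Integrable (fun x : ℝ => (x - s / B) ^ 2 * gammaPDFReal s B x) := by
  set t := s / B
  have hIoi : IntegrableOn (fun x : ℝ => (x - t) ^ 2 * gammaPDFReal s B x) (Set.Ioi 0) := by
    have I0 := gamma_moment_integrable (s := s) (B := B) hs hB 0
    have I1 := gamma_moment_integrable (s := s) (B := B) hs hB 1
    have I2 := gamma_moment_integrable (s := s) (B := B) hs hB 2
    have J1 : IntegrableOn (fun x : ℝ => (2 * t) * (x ^ 1 * gammaPDFReal s B x))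
        (Set.Ioi 0) := I1.const_mul _
    have J0 : IntegrableOn (fun x : ℝ => t ^ 2 * (x ^ 0 * gammaPDFReal s B x))
        (Set.Ioi 0) := I0.const_mul _
    have h : IntegrableOn
        (fun x : ℝ => (x ^ 2 * gammaPDFReal s B x - (2 * t) * (x ^ 1 * gammaPDFReal s B x))
          + t ^ 2 * (x ^ 0 * gammaPDFReal s B x)) (Set.Ioi 0) := (I2.sub J1).add J0
    exact h.congr_fun (fun x _ => by ring) measurableSet_Ioi
  have hIci : IntegrableOn (fun x : ℝ => (x - t) ^ 2 * gammaPDFReal s B x) (Set.Ici 0) :=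
    (integrableOn_Ici_iff_integrableOn_Ioi).mpr hIoi
  have hIio : IntegrableOn (fun x : ℝ => (x - t) ^ 2 * gammaPDFReal s B x) (Set.Iio 0) := by
    have hz : IntegrableOn (fun _ : ℝ => (0:ℝ)) (Set.Iio 0) := integrableOn_zero
    refine hz.congr_fun (fun x hx => ?_) measurableSet_Iio
    simp [gammaPDFReal, not_le.mpr (mem_Iio.mp hx)]
  have := hIio.union hIci
  rwa [Set.Iio_union_Ici, integrableOn_univ] at this

lemma gamma_var_lintegral_s13 (hs : 0 < s) (hB : 0 < B) :
    ∫⁻ x, ENNReal.ofReal ((x - s / B) ^ 2) ∂(gammaMeasure s B)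
      = ENNReal.ofReal (s / B ^ 2) := by
  set t := s / B with ht
  have hfm : Measurable fun x : ℝ => ENNReal.ofReal ((x - t) ^ 2) := by
    fun_prop
  have hpdfm : Measurable (gammaPDF s B) := (measurable_gammaPDFReal s B).ennreal_ofReal
  rw [gammaMeasure, lintegral_withDensity_eq_lintegral_mul _ hpdfm hfm]
  have heq : ∀ x : ℝ, (gammaPDF s B * fun x => ENNReal.ofReal ((x - t) ^ 2)) x
      = ENNReal.ofReal ((x - t) ^ 2 * gammaPDFReal s B x) := by
    intro x
    simp only [Pi.mul_apply, gammaPDF]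
    rw [ENNReal.ofReal_mul (sq_nonneg (x - t))]
    exact mul_comm _ _
  simp_rw [heq]
  rw [← ofReal_integral_eq_lintegral_ofReal (gamma_var_integrable_s13 hs hB)
    (ae_of_all _ (fun x => mul_nonneg (sq_nonneg _) (gammaPDFReal_nonneg hs hB x)))]
  congr 1
  have h0 : ∫ x in Set.Iio (0:ℝ), (x - t) ^ 2 * gammaPDFReal s B x = 0 := by
    rw [setIntegral_congr_fun (g := fun _ => (0:ℝ)) measurableSet_Iio
      (fun x (hx : x < 0) => by simp [gammaPDFReal, not_le.mpr hx])]
    simp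
  calc ∫ x, (x - t) ^ 2 * gammaPDFReal s B x
      = (∫ x in Set.Iio (0:ℝ), (x - t) ^ 2 * gammaPDFReal s B x)
        + ∫ x in Set.Ici (0:ℝ), (x - t) ^ 2 * gammaPDFReal s B x := by
        rw [← compl_Iio, integral_add_compl measurableSet_Iio (gamma_var_integrable_s13 hs hB)]
    _ = ∫ x in Set.Ioi (0:ℝ), (x - t) ^ 2 * gammaPDFReal s B x := by
        rw [h0, zero_add, integral_Ici_eq_integral_Ioi]
    _ = s / B ^ 2 := gamma_var_s13 hs hB

lemma gamma_tail {η : ℝ} (hs : 0 < s) (hB : 0 < B) (hη : 0 < η) :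
    gammaMeasure s B {x | η ≤ |x - s / B|} ≤ ENNReal.ofReal (s / (B ^ 2 * η ^ 2)) := by
  set t := s / B with ht
  have hsub : {x : ℝ | η ≤ |x - t|} ⊆
      {x : ℝ | ENNReal.ofReal (η ^ 2) ≤ ENNReal.ofReal ((x - t) ^ 2)} := by
    intro x hx
    have h1 : η ^ 2 ≤ (x - t) ^ 2 := by
      have := hx
      calc η ^ 2 ≤ |x - t| ^ 2 := by
            exact pow_le_pow_left₀ hη.le this 2
        _ = (x - t) ^ 2 := sq_abs _
    exact ENNReal.ofReal_le_ofReal h1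
  calc gammaMeasure s B {x | η ≤ |x - t|}
      ≤ gammaMeasure s B {x | ENNReal.ofReal (η ^ 2) ≤ ENNReal.ofReal ((x - t) ^ 2)} :=
        measure_mono hsub
    _ ≤ (∫⁻ x, ENNReal.ofReal ((x - t) ^ 2) ∂(gammaMeasure s B)) / ENNReal.ofReal (η ^ 2) :=
        meas_ge_le_lintegral_div (by fun_prop)
          (by simp [ENNReal.ofReal_eq_zero, not_le]; positivity) ENNReal.ofReal_ne_top
    _ = ENNReal.ofReal (s / B ^ 2) / ENNReal.ofReal (η ^ 2) := by
        rw [gamma_var_lintegral_s13 hs hB]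
    _ = ENNReal.ofReal (s / (B ^ 2 * η ^ 2)) := by
        rw [← ENNReal.ofReal_div_of_pos (by positivity), div_div]

end Aux

/-- Theorem 5, part ii: if `Tₘ ~ Gamma(shape m, rate B)` for each `m ≥ 1`, then
`exp(-m c / Tₘ) → exp(-c B)` in probability: the MLE of the CDF based on `m` lower record
values is consistent. -/
theorem cdf_mle_consistent {Ω : Type*} [MeasurableSpace Ω]
    (P : Measure Ω) [IsProbabilityMeasure P] (B c : ℝ) (hB : 0 < B) (hc : 0 ≤ c)
    (T : ℕ → Ω → ℝ)
    (hT : ∀ m : ℕ, 1 ≤ m → Measure.map (T m) P = gammaMeasure (m : ℝ) B) :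
    ∀ ε : ℝ, 0 < ε →
      Tendsto (fun m : ℕ =>
          P {ω | ε < |Real.exp (-((m : ℝ) * c / T m ω)) - Real.exp (-(c * B))|})
        atTop (nhds 0) := by
  intro ε hε
  rcases eq_or_lt_of_le hc with h0 | hc
  · -- degenerate case c = 0
    have : ∀ m : ℕ,
        {ω | ε < |Real.exp (-((m : ℝ) * c / T m ω)) - Real.exp (-(c * B))|} = (∅ : Set Ω) := by
      intro m
      ext ω
      simp [← h0, not_lt.mpr hε.le]
    simp only [this, measure_empty]
    exact tendsto_const_nhds
  · -- main case c > 0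
    -- continuity of y ↦ exp (-(c / y)) at 1/B
    have hB1 : (1:ℝ)/B ≠ 0 := by positivity
    have hcont : ContinuousAt (fun y : ℝ => Real.exp (-(c / y))) (1/B) :=
      Real.continuous_exp.continuousAt.comp
        ((continuousAt_const.div continuousAt_id hB1).neg)
    obtain ⟨δ, hδpos, hδ⟩ := Metric.continuousAt_iff.mp hcont ε hε
    have hval : ∀ y : ℝ, ∀ m : ℕ, m ≠ 0 →
        Real.exp (-((m : ℝ) * c / y)) = Real.exp (-(c / (y / m))) := by
      intro y m hm
      rw [div_div_eq_mul_div, mul_comm]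
    have hvalB : Real.exp (-(c * B)) = Real.exp (-(c / (1/B))) := by
      rw [div_div_eq_mul_div, div_one]
    -- inclusion into the gamma tail event
    have hincl : ∀ m : ℕ, 1 ≤ m →
        {ω | ε < |Real.exp (-((m : ℝ) * c / T m ω)) - Real.exp (-(c * B))|}
          ⊆ (fun ω => T m ω) ⁻¹' {x : ℝ | (m : ℝ) * δ ≤ |x - (m : ℝ) / B|} := by
      intro m hm ω hω
      simp only [Set.mem_setOf_eq] at hω
      by_contra hcon
      simp only [Set.mem_preimage, Set.mem_setOf_eq, not_le] at hcon
      have hm0 : (0:ℝ) < (m : ℝ) := by exact_mod_cast hm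
      have hdist : dist (T m ω / m) (1/B) < δ := by
        rw [Real.dist_eq]
        have hq : ((m : ℝ)/B)/m = 1/B := by
          rw [div_div, mul_comm, ← div_div, div_self hm0.ne']
        have heq : T m ω / m - 1/B = (T m ω - (m : ℝ)/B) / m := by
          rw [sub_div, hq]
        rw [heq, abs_div, abs_of_pos hm0, div_lt_iff₀ hm0]
        calc |T m ω - (m : ℝ)/B| < (m : ℝ) * δ := hcon
          _ = δ * m := by ring
      have := hδ hdist
      rw [Real.dist_eq] at this
      rw [hval (T m ω) m (by omega), hvalB] at hω
      exact absurd this (not_lt.mpr hω.le)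
    -- probability bound via the gamma tail
    have hbound : ∀ m : ℕ, 1 ≤ m →
        P {ω | ε < |Real.exp (-((m : ℝ) * c / T m ω)) - Real.exp (-(c * B))|}
          ≤ ENNReal.ofReal ((m : ℝ) / (B ^ 2 * ((m : ℝ) * δ) ^ 2)) := by
      intro m hm
      have hm0 : (0:ℝ) < (m : ℝ) := by exact_mod_cast hm
      have hmeas : MeasurableSet {x : ℝ | (m : ℝ) * δ ≤ |x - (m : ℝ) / B|} := by
        apply measurableSet_le measurable_const
        fun_prop
      have hprob : IsProbabilityMeasure (gammaMeasure (m : ℝ) B) :=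
        isProbabilityMeasure_gammaMeasure hm0 hB
      have hne : NeZero (Measure.map (T m) P) := by
        rw [hT m hm]
        exact ⟨hprob.ne_zero _⟩
      have haem : AEMeasurable (T m) P := aemeasurable_of_map_neZero hne
      calc P {ω | ε < |Real.exp (-((m : ℝ) * c / T m ω)) - Real.exp (-(c * B))|}
          ≤ P ((fun ω => T m ω) ⁻¹' {x : ℝ | (m : ℝ) * δ ≤ |x - (m : ℝ) / B|}) :=
            measure_mono (hincl m hm)
        _ = (Measure.map (T m) P) {x : ℝ | (m : ℝ) * δ ≤ |x - (m : ℝ) / B|} :=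
            (Measure.map_apply_of_aemeasurable haem hmeas).symm
        _ = gammaMeasure (m : ℝ) B {x : ℝ | (m : ℝ) * δ ≤ |x - (m : ℝ) / B|} := by
            rw [hT m hm]
        _ ≤ ENNReal.ofReal ((m : ℝ) / (B ^ 2 * ((m : ℝ) * δ) ^ 2)) :=
            gamma_tail hm0 hB (by positivity)
    -- the upper bound tends to 0
    have hupper : Tendsto (fun m : ℕ =>
        ENNReal.ofReal ((m : ℝ) / (B ^ 2 * ((m : ℝ) * δ) ^ 2))) atTop (nhds 0) := by
      have hreal : Tendsto (fun m : ℕ => (m : ℝ) / (B ^ 2 * ((m : ℝ) * δ) ^ 2))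
          atTop (nhds 0) := by
        have h1 : Tendsto (fun m : ℕ => (1 / (B ^ 2 * δ ^ 2)) * (1 / (m : ℝ)))
            atTop (nhds 0) := by
          have := tendsto_one_div_atTop_nhds_zero_nat.const_mul (1 / (B ^ 2 * δ ^ 2))
          rwa [mul_zero] at this
        refine h1.congr' ?_
        filter_upwards [eventually_ge_atTop 1] with m hm
        have hm0 : (0:ℝ) < (m : ℝ) := by exact_mod_cast hm
        field_simp
      have := (ENNReal.continuous_ofReal.tendsto 0).comp hreal
      rw [ENNReal.ofReal_zero] at this
      exact this
    refine tendsto_of_tendsto_of_tendsto_of_le_of_le' tendsto_const_nhds hupper ?_ ?_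
    · exact Eventually.of_forall (fun m => zero_le)
    · filter_upwards [eventually_ge_atTop 1] with m hm
      exact hbound m hm
end

section
/- (Theorem 5, part i) Let (Ω, 𝓕, P) be a probability space, B > 0, c ≥ 0, d ∈ ℝ, and (Tₘ)_{m≥1} a sequence of random variables on Ω with Tₘ ~ Gamma(shape m, rate B) for each m. Then d·(m/Tₘ)·exp(−m·c/Tₘ) converges in probability to d·B·exp(−c·B) as m → ∞. That is, the maximum likelihood estimator f̂ of the density f(x;θ) = −A′(x)B(θ)exp(−B(θ)A(x)) based on m lower record values is a consistent estimator of f(x;θ). -/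
open MeasureTheory ProbabilityTheory Filter
open Set Real

lemma integrableOn_aux {s r : ℝ} (hs : 0 < s) (hr : 0 < r) :
    IntegrableOn (fun x : ℝ => x ^ (s - 1) * Real.exp (-(r * x))) (Ioi 0) := by
  have h := integrableOn_rpow_mul_exp_neg_mul_rpow (p := 1) (s := s - 1) (b := r)
    (by linarith) zero_lt_one hr
  refine h.congr_fun (fun x hx => ?_) measurableSet_Ioi
  simp only [Real.rpow_one, neg_mul]

lemma moment_aux {s r : ℝ} (hs : 0 < s) (hr : 0 < r) (n : ℕ) :
    IntegrableOn (fun x : ℝ => x ^ n * (x ^ (s - 1) * Real.exp (-(r * x)))) (Ioi 0) ∧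
    ∫ x in Ioi 0, x ^ n * (x ^ (s - 1) * Real.exp (-(r * x))) =
      (1 / r) ^ (s + n) * Real.Gamma (s + n) := by
  have hs' : (0:ℝ) < s + n := by positivity
  have heq : EqOn (fun x : ℝ => x ^ (s + (n:ℝ) - 1) * Real.exp (-(r * x)))
      (fun x : ℝ => x ^ n * (x ^ (s - 1) * Real.exp (-(r * x)))) (Ioi 0) := by
    intro x hx
    have hx0 : (0:ℝ) < x := hx
    simp only
    rw [← mul_assoc, show s + (n:ℝ) - 1 = (n:ℝ) + (s - 1) by ring, Real.rpow_add hx0,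
      Real.rpow_natCast]
  constructor
  · exact (integrableOn_aux hs' hr).congr_fun heq measurableSet_Ioi
  · rw [← setIntegral_congr_fun measurableSet_Ioi heq,
      integral_rpow_mul_exp_neg_mul_Ioi hs' hr]

lemma gamma_lintegral_sq {m : ℕ} (hm : 1 ≤ m) {B : ℝ} (hB : 0 < B) :
    ∫⁻ x, ENNReal.ofReal ((x - m / B) ^ 2) ∂(gammaMeasure (m : ℝ) B) =
      ENNReal.ofReal ((m : ℝ) / B ^ 2) := by
  have hm0 : (0:ℝ) < m := by exact_mod_cast hm
  set s : ℝ := (m : ℝ) with hs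
  set μ : ℝ := (m : ℝ) / B with hμ
  have hG : 0 < Real.Gamma s := Real.Gamma_pos_of_pos hm0
  set K : ℝ := B ^ s / Real.Gamma s with hK
  have hK0 : 0 < K := by positivity
  have hfm : Measurable (gammaPDF s B) := (measurable_gammaPDFReal s B).ennreal_ofReal
  rw [gammaMeasure, lintegral_withDensity_eq_lintegral_mul _ hfm (by fun_prop)]
  have hpdf : ∀ x : ℝ, (gammaPDF s B * fun x => ENNReal.ofReal ((x - μ) ^ 2)) x =
      ENNReal.ofReal (gammaPDFReal s B x * (x - μ) ^ 2) := by
    intro x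
    simp [gammaPDF, ENNReal.ofReal_mul (gammaPDFReal_nonneg hm0 hB x)]
  simp only [hpdf]
  -- split off the negative half line
  rw [← lintegral_add_compl _ measurableSet_Ioi (μ := volume), compl_Ioi]
  have hneg : ∫⁻ x in Iic (0:ℝ), ENNReal.ofReal (gammaPDFReal s B x * (x - μ) ^ 2) = 0 := by
    rw [← setLIntegral_congr Iio_ae_eq_Iic]
    refine (setLIntegral_congr_fun_ae (g := fun _ => 0) measurableSet_Iio
      (ae_of_all _ fun x hx => ?_)).trans lintegral_zero
    simp [gammaPDFReal, not_le.mpr (show x < 0 from hx)]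
  rw [hneg, add_zero]
  -- positive part
  set F : ℝ → ℝ := fun x => gammaPDFReal s B x * (x - μ) ^ 2 with hF
  have h0 := moment_aux hm0 hB 0
  have h1 := moment_aux hm0 hB 1
  have h2 := moment_aux hm0 hB 2
  have heq : EqOn F (fun x => K * (x ^ 2 * (x ^ (s - 1) * Real.exp (-(B * x)))) -
      (2 * μ * K) * (x ^ 1 * (x ^ (s - 1) * Real.exp (-(B * x)))) +
      (μ ^ 2 * K) * (x ^ 0 * (x ^ (s - 1) * Real.exp (-(B * x))))) (Ioi 0) := by
    intro x hx
    have hx0 : (0:ℝ) < x := hx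
    simp only [hF, gammaPDFReal, if_pos hx0.le, hK]
    ring
  have hc2 : IntegrableOn (fun x => K * (x ^ 2 * (x ^ (s - 1) * Real.exp (-(B * x))))) (Ioi 0) :=
    h2.1.const_mul K
  have hc1 : IntegrableOn
      (fun x => (2 * μ * K) * (x ^ 1 * (x ^ (s - 1) * Real.exp (-(B * x))))) (Ioi 0) :=
    h1.1.const_mul (2 * μ * K)
  have hc0 : IntegrableOn
      (fun x => (μ ^ 2 * K) * (x ^ 0 * (x ^ (s - 1) * Real.exp (-(B * x))))) (Ioi 0) :=
    h0.1.const_mul (μ ^ 2 * K)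
  have hcsub : IntegrableOn (fun x => K * (x ^ 2 * (x ^ (s - 1) * Real.exp (-(B * x)))) -
      (2 * μ * K) * (x ^ 1 * (x ^ (s - 1) * Real.exp (-(B * x))))) (Ioi 0) := hc2.sub hc1
  have hcombo : IntegrableOn (fun x => K * (x ^ 2 * (x ^ (s - 1) * Real.exp (-(B * x)))) -
      (2 * μ * K) * (x ^ 1 * (x ^ (s - 1) * Real.exp (-(B * x)))) +
      (μ ^ 2 * K) * (x ^ 0 * (x ^ (s - 1) * Real.exp (-(B * x))))) (Ioi 0) := hcsub.add hc0
  have hIntF : IntegrableOn F (Ioi 0) :=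
    hcombo.congr_fun (fun x hx => (heq hx).symm) measurableSet_Ioi
  have hFnonneg : 0 ≤ᵐ[volume.restrict (Ioi (0:ℝ))] F :=
    ae_of_all _ fun x => mul_nonneg (gammaPDFReal_nonneg hm0 hB x) (sq_nonneg _)
  rw [← ofReal_integral_eq_lintegral_ofReal hIntF hFnonneg]
  congr 1
  rw [setIntegral_congr_fun measurableSet_Ioi heq, integral_add hcsub hc0,
    integral_sub hc2 hc1,
    integral_const_mul, integral_const_mul, integral_const_mul, h0.2, h1.2, h2.2]
  have hBpow : ∀ t : ℝ, K * ((1 / B) ^ (s + t) * Real.Gamma (s + t)) =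
      (1 / B) ^ t * Real.Gamma (s + t) / Real.Gamma s := by
    intro t
    have hone : B ^ s * (1 / B) ^ s = 1 := by
      rw [← Real.mul_rpow hB.le (by positivity), mul_one_div_cancel hB.ne', Real.one_rpow]
    rw [hK, Real.rpow_add (by positivity : (0:ℝ) < 1 / B)]
    linear_combination ((1 / B) ^ t * Real.Gamma (s + t) / Real.Gamma s) * hone
  have hΓ1 : Real.Gamma (s + 1) = s * Real.Gamma s := Real.Gamma_add_one hm0.ne'
  have hΓ2 : Real.Gamma (s + 2) = (s + 1) * (s * Real.Gamma s) := by
    rw [show s + 2 = (s + 1) + 1 by ring, Real.Gamma_add_one (by positivity), hΓ1]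
  push_cast
  have t2 : K * ((1 / B) ^ (s + (2:ℝ)) * Real.Gamma (s + 2)) = (s + 1) * s / B ^ 2 := by
    rw [hBpow 2, hΓ2, show ((2:ℝ)) = ((2:ℕ):ℝ) by norm_num, Real.rpow_natCast]
    field_simp
  have t1 : K * ((1 / B) ^ (s + (1:ℝ)) * Real.Gamma (s + 1)) = s / B := by
    rw [hBpow 1, hΓ1, Real.rpow_one]
    field_simp
  have t0 : K * ((1 / B) ^ (s + (0:ℝ)) * Real.Gamma (s + 0)) = 1 := by
    rw [hBpow 0, Real.rpow_zero, one_mul, add_zero, div_self hG.ne']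
  have hμ2 : μ = s / B := hμ
  linear_combination t2 - 2 * μ * t1 + μ ^ 2 * t0 + (μ - s / B) * hμ2


/-- Theorem 5, part i: if `Tₘ ~ Gamma(shape m, rate B)` for each `m ≥ 1`, then
`d (m / Tₘ) exp(-m c / Tₘ) → d B exp(-c B)` in probability: the MLE of the density based on
`m` lower record values is consistent (with `c = A(x) ≥ 0` and `d = -A'(x)`). -/
theorem pdf_mle_consistent {Ω : Type*} [MeasurableSpace Ω]
    (P : Measure Ω) [IsProbabilityMeasure P] (B c d : ℝ) (hB : 0 < B) (hc : 0 ≤ c)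
    (T : ℕ → Ω → ℝ)
    (hT : ∀ m : ℕ, 1 ≤ m → Measure.map (T m) P = gammaMeasure (m : ℝ) B) :
    ∀ ε : ℝ, 0 < ε →
      Tendsto (fun m : ℕ =>
          P {ω | ε < |d * ((m : ℝ) / T m ω) * Real.exp (-((m : ℝ) * c / T m ω)) -
            d * B * Real.exp (-(c * B))|})
        atTop (nhds 0) := by
  intro ε hε
  -- continuity of y ↦ d y e^{-cy} at B
  have hcont : ContinuousAt (fun y : ℝ => d * y * Real.exp (-(c * y))) B := by fun_prop
  obtain ⟨δ, hδ0, hδ⟩ := Metric.continuousAt_iff.mp hcont ε hε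
  have hδ' : ∀ y : ℝ, ε < |d * y * Real.exp (-(c * y)) - d * B * Real.exp (-(c * B))| →
      δ ≤ |y - B| := by
    intro y hy
    by_contra hlt
    push_neg at hlt
    have := hδ (show dist y B < δ by rwa [Real.dist_eq])
    rw [Real.dist_eq] at this
    exact absurd hy (not_lt.mpr this.le)
  set γ : ℝ := δ / (B * (B + δ)) with hγ
  have hγ0 : 0 < γ := by positivity
  -- pointwise inclusion
  have key : ∀ m : ℕ, 1 ≤ m → ∀ x : ℝ,
      ε < |d * ((m : ℝ) / x) * Real.exp (-((m : ℝ) * c / x)) - d * B * Real.exp (-(c * B))| →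
      (γ * m) ^ 2 ≤ (x - m / B) ^ 2 := by
    intro m hm x hx
    have hm0 : (0:ℝ) < m := by exact_mod_cast hm
    rw [show (m : ℝ) * c / x = c * ((m : ℝ) / x) by ring] at hx
    have hdist : δ ≤ |(m : ℝ) / x - B| := hδ' _ hx
    have hmB : (m : ℝ) / B * B = m := div_mul_cancel₀ _ hB.ne'
    have hgoal : γ * m ≤ |x - m / B| := by
      rcases le_or_gt x 0 with hx0 | hx0
      · rw [abs_sub_comm, abs_of_nonneg (by nlinarith [div_pos hm0 hB])]
        rw [hγ, div_mul_eq_mul_div, div_le_iff₀ (by positivity)]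
        rw [show ((m:ℝ)/B - x) * (B*(B+δ)) = (m:ℝ)*(B+δ) - x*(B*(B+δ)) by field_simp]
        nlinarith [mul_pos hm0 hB,
          mul_nonneg (mul_nonneg hB.le (by linarith : (0:ℝ) ≤ B + δ)) (neg_nonneg.mpr hx0)]
      · rcases le_abs.mp hdist with hca | hcb
        · -- B + δ ≤ m/x, so x is small
          have hca' : B + δ ≤ (m:ℝ) / x := by linarith
          have hxm : (B + δ) * x ≤ (m:ℝ) := (le_div_iff₀ hx0).mp hca'
          have habs : (m:ℝ)/B - x ≤ |x - (m:ℝ)/B| := by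
            rw [abs_sub_comm]; exact le_abs_self _
          refine le_trans ?_ habs
          rw [hγ, div_mul_eq_mul_div, div_le_iff₀ (by positivity)]
          rw [show ((m:ℝ)/B - x) * (B*(B+δ)) = (m:ℝ)*(B+δ) - x*(B*(B+δ)) by field_simp]
          nlinarith [mul_le_mul_of_nonneg_left hxm hB.le]
        · -- m/x ≤ B - δ, so x is large
          have hcb' : (m:ℝ) / x ≤ B - δ := by linarith
          have hδB : δ < B := by nlinarith [div_pos hm0 hx0]
          have hxm : (m : ℝ) ≤ (B - δ) * x := (div_le_iff₀ hx0).mp hcb'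
          refine le_trans ?_ (le_abs_self _)
          rw [hγ, div_mul_eq_mul_div, div_le_iff₀ (by positivity)]
          rw [show (x - (m:ℝ)/B) * (B*(B+δ)) = x*(B*(B+δ)) - (m:ℝ)*(B+δ) by field_simp]
          nlinarith [mul_le_mul_of_nonneg_left hxm hB.le,
            mul_le_mul_of_nonneg_left hxm hδ0.le,
            mul_nonneg (mul_nonneg hx0.le hδ0.le) hδ0.le]
    calc (γ * m) ^ 2 = |γ * m| ^ 2 := by rw [sq_abs]
    _ ≤ |x - m / B| ^ 2 := by
        apply pow_le_pow_left₀ (abs_nonneg _)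
        rw [abs_of_nonneg (by positivity : (0:ℝ) ≤ γ * m)]
        exact hgoal
    _ = (x - m / B) ^ 2 := sq_abs _
  -- measure bound
  have hmeas : ∀ m : ℕ, 1 ≤ m →
      P {ω | ε < |d * ((m : ℝ) / T m ω) * Real.exp (-((m : ℝ) * c / T m ω)) -
        d * B * Real.exp (-(c * B))|} ≤
      ENNReal.ofReal ((1 / (B ^ 2 * γ ^ 2)) / m) := by
    intro m hm
    have hm0 : (0:ℝ) < m := by exact_mod_cast hm
    have hprob : IsProbabilityMeasure (gammaMeasure (m : ℝ) B) :=
      isProbabilityMeasure_gammaMeasure hm0 hB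
    have hae : AEMeasurable (T m) P := by
      by_contra hnm
      have h0 := Measure.map_of_not_aemeasurable (μ := P) hnm
      rw [hT m hm] at h0
      exact hprob.ne_zero _ h0
    set S : Set ℝ := {x : ℝ | (γ * m) ^ 2 ≤ (x - m / B) ^ 2} with hSdef
    have hS : MeasurableSet S :=
      measurableSet_le measurable_const ((measurable_id.sub_const _).pow_const 2)
    have h1 : P {ω | ε < |d * ((m : ℝ) / T m ω) * Real.exp (-((m : ℝ) * c / T m ω)) -
        d * B * Real.exp (-(c * B))|} ≤ P (T m ⁻¹' S) :=
      measure_mono (fun ω hω => key m hm (T m ω) hω)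
    rw [← Measure.map_apply_of_aemeasurable hae hS, hT m hm] at h1
    have h2 : gammaMeasure (m : ℝ) B S ≤
        (∫⁻ x, ENNReal.ofReal ((x - m / B) ^ 2) ∂(gammaMeasure (m : ℝ) B)) /
          ENNReal.ofReal ((γ * m) ^ 2) := by
      have hSeq : S = {x : ℝ | ENNReal.ofReal ((γ * m) ^ 2) ≤
          ENNReal.ofReal ((x - m / B) ^ 2)} := by
        ext x
        simp [hSdef, ENNReal.ofReal_le_ofReal_iff (sq_nonneg (x - m / B))]
      rw [hSeq]
      exact meas_ge_le_lintegral_div (by fun_prop)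
        (ne_of_gt (ENNReal.ofReal_pos.mpr (by positivity))) ENNReal.ofReal_ne_top
    rw [gamma_lintegral_sq hm hB] at h2
    refine le_trans h1 (le_trans h2 (le_of_eq ?_))
    rw [← ENNReal.ofReal_div_of_pos (by positivity)]
    congr 1
    field_simp
  -- squeeze
  have hb : Tendsto (fun m : ℕ => ENNReal.ofReal ((1 / (B ^ 2 * γ ^ 2)) / (m : ℝ)))
      atTop (nhds 0) := by
    rw [← ENNReal.ofReal_zero]
    exact ENNReal.tendsto_ofReal (tendsto_const_div_atTop_nhds_zero_nat _)
  refine tendsto_of_tendsto_of_tendsto_of_le_of_le' tendsto_const_nhds hb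
    (Eventually.of_forall (fun m => zero_le)) ?_
  filter_upwards [eventually_ge_atTop 1] with m hm using hmeas m hm
end

section
/- (Theorem 6) Let (Ω, 𝓕, P) be a probability space, let B : ℝ → ℝ and θ ∈ ℝ with B(θ) > 0, and let G : ℝ → ℝ be a left inverse of B (G(B(θ)) = θ) that is continuous at B(θ). Let (Tₘ)_{m≥1} be a sequence of random variables on Ω with Tₘ ~ Gamma(shape m, rate B(θ)) for each m. Then the maximum likelihood estimator based on m lower record values, θ̂ₘ = G(m/Tₘ), converges in probability to θ as m → ∞. -/
open MeasureTheory ProbabilityTheory Filter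
open Real Set

lemma gamma_integrable_aux {s r : ℝ} (hs : -1 < s) (hr : 0 < r) :
    IntegrableOn (fun x : ℝ => x ^ s * Real.exp (-(r * x))) (Ioi 0) := by
  have := integrableOn_rpow_mul_exp_neg_mul_rpow (p := 1) (s := s) (b := r) hs one_pos hr
  simpa [Real.rpow_one, neg_mul] using this

lemma gamma_sq_lintegral {a r : ℝ} (ha : 0 < a) (hr : 0 < r) :
    ∫⁻ x, ENNReal.ofReal ((x - a / r) ^ 2) ∂(gammaMeasure a r)
      = ENNReal.ofReal (a / r ^ 2) := by
  have hΓ : Real.Gamma a ≠ 0 := (Real.Gamma_pos_of_pos ha).ne'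
  have hrpow : (0:ℝ) < r ^ a := Real.rpow_pos_of_pos hr a
  set μ : ℝ := a / r with hμ
  set h : ℝ → ℝ := fun x => gammaPDFReal a r x * (x - μ) ^ 2 with hh
  have hmg : Measurable fun x : ℝ => ENNReal.ofReal ((x - μ) ^ 2) := by fun_prop
  have hmpdf : Measurable (gammaPDF a r) := by
    unfold gammaPDF; exact (measurable_gammaPDFReal a r).ennreal_ofReal
  rw [gammaMeasure, lintegral_withDensity_eq_lintegral_mul _ hmpdf hmg]
  have h1 : ∀ x : ℝ, (gammaPDF a r * fun x => ENNReal.ofReal ((x - μ) ^ 2)) x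
      = ENNReal.ofReal (h x) := by
    intro x
    simp only [Pi.mul_apply, gammaPDF, hh]
    rw [← ENNReal.ofReal_mul (gammaPDFReal_nonneg ha hr x)]
  simp_rw [h1]
  -- split the line
  rw [← lintegral_add_compl _ measurableSet_Ici (μ := volume), compl_Ici]
  have hIio : ∫⁻ x in Iio 0, ENNReal.ofReal (h x) = 0 := by
    rw [setLIntegral_congr_fun measurableSet_Iio
      (fun x (hx : x < 0) => ?_), lintegral_zero]
    have : gammaPDFReal a r x = 0 := by
      simp [gammaPDFReal, not_le.mpr hx]
    simp [hh, this]
  rw [hIio, add_zero]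
  -- integrability on Ici 0
  have hint2 : IntegrableOn (fun x : ℝ => x ^ (a + 1) * Real.exp (-(r * x))) (Ioi 0) :=
    gamma_integrable_aux (by linarith) hr
  have hint1 : IntegrableOn (fun x : ℝ => x ^ a * Real.exp (-(r * x))) (Ioi 0) :=
    gamma_integrable_aux (by linarith) hr
  have hint0 : IntegrableOn (fun x : ℝ => x ^ (a - 1) * Real.exp (-(r * x))) (Ioi 0) :=
    gamma_integrable_aux (by linarith) hr
  set C : ℝ := r ^ a / Real.Gamma a with hC
  set g : ℝ → ℝ := fun x => C * (x ^ (a + 1) * Real.exp (-(r * x)))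
      - 2 * μ * C * (x ^ a * Real.exp (-(r * x)))
      + μ ^ 2 * C * (x ^ (a - 1) * Real.exp (-(r * x))) with hg
  have hintg : IntegrableOn g (Ioi 0) :=
    ((hint2.const_mul C).sub ((hint1.const_mul (2 * μ * C)))).add
      (hint0.const_mul (μ ^ 2 * C))
  have heq : EqOn g h (Ioi 0) := by
    intro x (hx : 0 < x)
    have h2 : x ^ (a + 1) = x ^ (a - 1) * x ^ 2 := by
      have h := Real.rpow_add hx (a - 1) ((2:ℕ):ℝ)
      rw [Real.rpow_natCast] at h
      rw [← h]; congr 1; push_cast; ring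
    have h1' : x ^ a = x ^ (a - 1) * x := by
      have h := Real.rpow_add hx (a - 1) 1
      rw [Real.rpow_one] at h
      rw [← h]; congr 1; ring
    simp only [hg, hh, gammaPDFReal, if_pos hx.le, hC]
    rw [h2, h1']
    ring
  have hinth : IntegrableOn h (Ici 0) := by
    rw [integrableOn_Ici_iff_integrableOn_Ioi]
    exact hintg.congr_fun heq measurableSet_Ioi
  have hnn : 0 ≤ᵐ[volume.restrict (Ici 0)] h := by
    refine ae_of_all _ fun x => ?_
    exact mul_nonneg (gammaPDFReal_nonneg ha hr x) (sq_nonneg _)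
  rw [← ofReal_integral_eq_lintegral_ofReal hinth hnn]
  congr 1
  rw [integral_Ici_eq_integral_Ioi, ← setIntegral_congr_fun measurableSet_Ioi heq]
  have key : ∀ b : ℝ, 0 < b → ∫ x in Ioi 0, x ^ (b - 1) * Real.exp (-(r * x))
      = (1 / r) ^ b * Real.Gamma b := fun b hb =>
    integral_rpow_mul_exp_neg_mul_Ioi hb hr
  have k2 := key (a + 2) (by linarith)
  have k1 := key (a + 1) (by linarith)
  have k0 := key a ha
  have e2 : (a : ℝ) + 2 - 1 = a + 1 := by ring
  have e1 : (a : ℝ) + 1 - 1 = a := by ring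
  rw [e2] at k2
  rw [e1] at k1
  have i2 : IntegrableOn (fun x : ℝ => C * (x ^ (a + 1) * Real.exp (-(r * x)))) (Ioi 0) :=
    hint2.const_mul C
  have i1 : IntegrableOn (fun x : ℝ => 2 * μ * C * (x ^ a * Real.exp (-(r * x)))) (Ioi 0) :=
    hint1.const_mul _
  have i0 : IntegrableOn (fun x : ℝ => μ ^ 2 * C * (x ^ (a - 1) * Real.exp (-(r * x)))) (Ioi 0) :=
    hint0.const_mul _
  have i12 : IntegrableOn (fun x : ℝ => C * (x ^ (a + 1) * Real.exp (-(r * x)))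
      - 2 * μ * C * (x ^ a * Real.exp (-(r * x)))) (Ioi 0) := i2.sub i1
  rw [hg]
  rw [integral_add i12 i0, integral_sub i2 i1,
    integral_const_mul, integral_const_mul, integral_const_mul, k2, k1, k0]
  -- now pure algebra
  have hΓ2 : Real.Gamma (a + 2) = (a + 1) * (a * Real.Gamma a) := by
    have : (a : ℝ) + 2 = (a + 1) + 1 := by ring
    rw [this, Real.Gamma_add_one (by positivity), Real.Gamma_add_one ha.ne']
  have hΓ1 : Real.Gamma (a + 1) = a * Real.Gamma a := Real.Gamma_add_one ha.ne'
  have hp2 : (1 / r) ^ (a + 2) = (1 / r ^ a) * (1 / r ^ 2) := by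
    rw [Real.rpow_add (by positivity), Real.div_rpow zero_le_one hr.le, Real.one_rpow,
      show ((2:ℝ) = ((2:ℕ):ℝ)) by norm_num, Real.rpow_natCast, div_pow, one_pow]
  have hp1 : (1 / r) ^ (a + 1) = (1 / r ^ a) * (1 / r) := by
    rw [Real.rpow_add (by positivity), Real.div_rpow zero_le_one hr.le, Real.one_rpow,
      Real.rpow_one]
  have hp0 : (1 / r) ^ a = 1 / r ^ a := by
    rw [Real.div_rpow zero_le_one hr.le, Real.one_rpow]
  rw [hΓ2, hΓ1, hp2, hp1, hp0, hC, hμ]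
  field_simp
  ring

/-- Theorem 6: if `G` is a left inverse of `B` continuous at `B θ > 0`, and
`Tₘ ~ Gamma(shape m, rate B θ)` for each `m ≥ 1`, then the MLE based on `m` lower record
values, `θ̂ₘ = G(m / Tₘ)`, converges to `θ` in probability. -/
theorem parameter_mle_consistent {Ω : Type*} [MeasurableSpace Ω]
    (P : Measure Ω) [IsProbabilityMeasure P] (B : ℝ → ℝ) (θ : ℝ) (hB : 0 < B θ)
    (G : ℝ → ℝ) (hG : G (B θ) = θ) (hGcont : ContinuousAt G (B θ))
    (T : ℕ → Ω → ℝ)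
    (hT : ∀ m : ℕ, 1 ≤ m → Measure.map (T m) P = gammaMeasure (m : ℝ) (B θ)) :
    ∀ ε : ℝ, 0 < ε →
      Tendsto (fun m : ℕ => P {ω | ε < |G ((m : ℝ) / T m ω) - θ|}) atTop (nhds 0) := by
  intro ε hε
  set β : ℝ := B θ with hβ
  obtain ⟨δ, hδ, hδG⟩ : ∃ δ > 0, ∀ x : ℝ, |x - β| < δ → ¬ (ε < |G x - θ|) := by
    obtain ⟨δ, hδ, hd⟩ := Metric.continuousAt_iff.mp hGcont ε hε
    refine ⟨δ, hδ, fun x hx => not_lt.mpr (le_of_lt ?_)⟩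
    have := hd (show dist x β < δ by simpa [Real.dist_eq] using hx)
    simpa [Real.dist_eq, hG] using this
  set δ' : ℝ := min δ (β / 2) with hδ'
  have hδ'pos : 0 < δ' := lt_min hδ (by linarith)
  have hδ'le : δ' ≤ δ := min_le_left _ _
  have hδ'β : δ' ≤ β / 2 := min_le_right _ _
  set c : ℝ := δ' / (β * (β + δ')) with hc
  have hβδ : 0 < β + δ' := by linarith
  have hβδ2 : 0 < β - δ' := by linarith
  have hcpos : 0 < c := div_pos hδ'pos (by positivity)
  -- key deterministic implication
  have hkey : ∀ m : ℕ, 1 ≤ m → ∀ x : ℝ, ε < |G ((m : ℝ) / x) - θ| →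
      c * m ≤ |x - (m : ℝ) / β| := by
    intro m hm x hx
    have hm1 : (1 : ℝ) ≤ (m : ℝ) := by exact_mod_cast hm
    have habs : δ' ≤ |(m : ℝ) / x - β| := by
      have hd : δ ≤ |(m : ℝ) / x - β| := not_lt.mp (fun h => hδG _ h hx)
      linarith
    rcases le_abs.mp habs with h1 | h1
    · -- β + δ' ≤ m/x
      have hxpos : 0 < x := by
        by_contra hxc
        push_neg at hxc
        have : (m : ℝ) / x ≤ 0 :=
          div_nonpos_of_nonneg_of_nonpos (by positivity) hxc
        linarith
      have hxle : x ≤ (m : ℝ) / (β + δ') := by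
        rw [le_div_iff₀ hβδ]
        calc x * (β + δ') ≤ x * ((m : ℝ) / x) :=
              mul_le_mul_of_nonneg_left (by linarith) hxpos.le
          _ = (m : ℝ) := by field_simp
      have heq : c * m = (m : ℝ) / β - (m : ℝ) / (β + δ') := by
        rw [hc]; field_simp; ring
      calc c * m = (m : ℝ) / β - (m : ℝ) / (β + δ') := heq
        _ ≤ (m : ℝ) / β - x := by linarith
        _ = -(x - (m : ℝ) / β) := by ring
        _ ≤ |x - (m : ℝ) / β| := neg_le_abs _
    · -- m/x ≤ β - δ'
      have h1' : (m : ℝ) / x ≤ β - δ' := by linarith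
      rcases le_or_gt x 0 with hx0 | hxpos
      · have hcb : c ≤ 1 / β := by
          rw [hc, div_le_div_iff₀ (by positivity) hB]
          nlinarith
        calc c * m ≤ (1 / β) * m := mul_le_mul_of_nonneg_right hcb (by positivity)
          _ = (m : ℝ) / β := by ring
          _ ≤ -(x - (m : ℝ) / β) := by linarith
          _ ≤ |x - (m : ℝ) / β| := neg_le_abs _
      · have hxge : (m : ℝ) / (β - δ') ≤ x := by
          rw [div_le_iff₀ hβδ2]
          calc (m : ℝ) = x * ((m : ℝ) / x) := by field_simp
            _ ≤ x * (β - δ') := mul_le_mul_of_nonneg_left h1' hxpos.le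
        have heq2 : (m : ℝ) / (β - δ') - (m : ℝ) / β = (m : ℝ) * δ' / (β * (β - δ')) := by
          field_simp; ring
        have hmono : (m : ℝ) * δ' / (β * (β + δ')) ≤ (m : ℝ) * δ' / (β * (β - δ')) := by
          rw [div_le_div_iff₀ (by positivity) (by positivity)]
          nlinarith [mul_nonneg (mul_nonneg (mul_nonneg
            (by linarith : (0:ℝ) ≤ (m:ℝ)) hδ'pos.le) hB.le) hδ'pos.le]
        calc c * m = (m : ℝ) * δ' / (β * (β + δ')) := by rw [hc]; ring
          _ ≤ (m : ℝ) * δ' / (β * (β - δ')) := hmono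
          _ = (m : ℝ) / (β - δ') - (m : ℝ) / β := heq2.symm
          _ ≤ x - (m : ℝ) / β := by linarith
          _ ≤ |x - (m : ℝ) / β| := le_abs_self _
  -- measure bound for m ≥ 1
  have hbound : ∀ m : ℕ, 1 ≤ m →
      P {ω | ε < |G ((m : ℝ) / T m ω) - θ|} ≤ ENNReal.ofReal (1 / (β ^ 2 * c ^ 2 * m)) := by
    intro m hm
    have hm1 : (1 : ℝ) ≤ (m : ℝ) := by exact_mod_cast hm
    have hmpos : (0 : ℝ) < m := by linarith
    have hTmeas : AEMeasurable (T m) P := by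
      by_contra hc'
      have hmap0 := hT m hm
      rw [Measure.map_of_not_aemeasurable hc'] at hmap0
      have hprob : IsProbabilityMeasure (gammaMeasure (m : ℝ) β) :=
        isProbabilityMeasure_gammaMeasure (by positivity) hB
      have h1 := hprob.measure_univ
      rw [← hmap0] at h1
      simp at h1
    set S : Set ℝ := {x | ENNReal.ofReal ((c * m) ^ 2) ≤ ENNReal.ofReal ((x - (m : ℝ) / β) ^ 2)}
      with hS
    have hSmeas : MeasurableSet S :=
      measurableSet_le measurable_const (by fun_prop)
    have hsub : {ω | ε < |G ((m : ℝ) / T m ω) - θ|} ⊆ T m ⁻¹' S := by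
      intro ω hω
      have h1 := hkey m hm (T m ω) hω
      have h2 : (c * m) ^ 2 ≤ (T m ω - (m : ℝ) / β) ^ 2 := by
        rw [← sq_abs (T m ω - (m : ℝ) / β)]
        exact pow_le_pow_left₀ (by positivity) h1 2
      exact ENNReal.ofReal_le_ofReal h2
    have hmap : P (T m ⁻¹' S) = gammaMeasure (m : ℝ) β S := by
      rw [← Measure.map_apply_of_aemeasurable hTmeas hSmeas, hT m hm]
    have hcheb : gammaMeasure (m : ℝ) β S
        ≤ (∫⁻ x, ENNReal.ofReal ((x - (m : ℝ) / β) ^ 2) ∂(gammaMeasure (m : ℝ) β))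
            / ENNReal.ofReal ((c * m) ^ 2) := by
      exact meas_ge_le_lintegral_div (by fun_prop)
        (ENNReal.ofReal_pos.mpr (pow_pos (mul_pos hcpos hmpos) 2)).ne' ENNReal.ofReal_ne_top
    rw [gamma_sq_lintegral (by positivity : (0:ℝ) < (m:ℝ)) hB] at hcheb
    calc P {ω | ε < |G ((m : ℝ) / T m ω) - θ|} ≤ P (T m ⁻¹' S) := measure_mono hsub
      _ = gammaMeasure (m : ℝ) β S := hmap
      _ ≤ ENNReal.ofReal ((m : ℝ) / β ^ 2) / ENNReal.ofReal ((c * m) ^ 2) := hcheb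
      _ = ENNReal.ofReal (((m : ℝ) / β ^ 2) / ((c * m) ^ 2)) :=
          (ENNReal.ofReal_div_of_pos (by positivity)).symm
      _ = ENNReal.ofReal (1 / (β ^ 2 * c ^ 2 * m)) := by
          congr 1
          field_simp
  -- squeeze
  have hupper : Tendsto (fun m : ℕ => ENNReal.ofReal (1 / (β ^ 2 * c ^ 2 * m))) atTop (nhds 0) := by
    rw [← ENNReal.ofReal_zero]
    apply ENNReal.tendsto_ofReal
    have h0 : Tendsto (fun m : ℕ => (1 / (β ^ 2 * c ^ 2)) * (1 / (m : ℝ))) atTop (nhds 0) := by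
      have := tendsto_one_div_atTop_nhds_zero_nat.const_mul (1 / (β ^ 2 * c ^ 2))
      simpa using this
    refine h0.congr fun m => ?_
    rcases Nat.eq_zero_or_pos m with rfl | hm
    · simp
    · have : (0:ℝ) < m := by exact_mod_cast hm
      field_simp
  refine tendsto_of_tendsto_of_tendsto_of_le_of_le' tendsto_const_nhds hupper
    (Eventually.of_forall fun m => zero_le) ?_
  filter_upwards [eventually_ge_atTop 1] with m hm
  exact hbound m hm
end
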